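/- Every stable model of a finite EG program satisfies the program's completion (the set consisting of the completed definitions of all predicate symbols occurring in the program together with the universal closures of the formula representations of all its constraints). -/

import Mathlib

namespace EG


/-! ### Relation symbols -/

inductive Rel : Type where
  | req | rne | rlt | rle | rgt | rge

/-- Evaluation of a relation symbol relative to a strict total order `lt`
on the domain (equality is genuine equality of domain elements). -/
def Rel.eval {α : Type} (lt : α → α → Prop) : Rel → α → α → Prop
  | .req, a, b => a = b
  | .rne, a, b => a ≠ b
  | .rlt, a, b => lt a b
  | .rle, a, b => lt a b ∨ a = b
  | .rgt, a, b => lt b a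
  | .rge, a, b => lt b a ∨ a = b

/-! ### Precomputed terms -/

/-- Precomputed terms over a type `C` of symbolic constants:
numerals, symbolic constants, `inf`, `sup`, and applications of a symbolic
constant to a tuple of precomputed terms. -/
inductive Pre (C : Type) : Type where
  | inf
  | sup
  | num (n : ℤ)
  | sym (c : C)
  | app (f : C) (args : List (Pre C))

/-- The assumed total order on precomputed terms: a strict total order with
`inf` least, `sup` greatest, in which numerals are ordered as the integers. -/
structure PreOrderOK {C : Type} (lt : Pre C → Pre C → Prop) : Prop where
  irrefl : ∀ a, ¬ lt a a
  trans : ∀ a b c, lt a b → lt b c → lt a c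
  total : ∀ a b, lt a b ∨ a = b ∨ lt b a
  inf_least : ∀ a, a ≠ Pre.inf → lt Pre.inf a
  sup_greatest : ∀ a, a ≠ Pre.sup → lt a Pre.sup
  num_iff : ∀ m n : ℤ, (lt (Pre.num m) (Pre.num n) ↔ m < n)

/-- Atoms `p(r)` where `r` is a tuple of precomputed terms. -/
abbrev EGAtom (C : Type) := C × List (Pre C)

/-- An interpretation is a set of atoms over precomputed terms. -/
abbrev Interp (C : Type) := Set (EGAtom C)

/-- Valuations: variables (natural numbers) ↦ precomputed terms. -/
abbrev Val (C : Type) := ℕ → Pre C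

/-- Simultaneously update a valuation on a list of variables by a list of values. -/
def updList {C : Type} : Val C → List ℕ → List (Pre C) → Val C
  | v, [], _ => v
  | v, _ :: _, [] => v
  | v, x :: xs, r :: rs => Function.update (updList v xs rs) x r

/-! ### Terms -/

/-- Terms over symbolic constants `C` and operation names `O`. -/
inductive Term (C O : Type) : Type where
  | num (n : ℤ)
  | sym (c : C)
  | var (x : ℕ)
  | inf
  | sup
  | app (f : C) (ts : List (Term C O))
  | op (o : O) (ts : List (Term C O))
  | interval (t₁ t₂ : Term C O)

mutual
/-- The list of variables occurring in a term. -/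
def Term.varList {C O : Type} : Term C O → List ℕ
  | .num _ => []
  | .sym _ => []
  | .var x => [x]
  | .inf => []
  | .sup => []
  | .app _ ts => Term.varListL ts
  | .op _ ts => Term.varListL ts
  | .interval t₁ t₂ => t₁.varList ++ t₂.varList

def Term.varListL {C O : Type} : List (Term C O) → List ℕ
  | [] => []
  | t :: ts => t.varList ++ Term.varListL ts
end

/-- A term (or tuple of terms, etc.) is ground if it contains no variables. -/
def Term.Ground {C O : Type} (t : Term C O) : Prop := t.varList = []

mutual
/-- The set of values of a term under a valuation `v` (for a ground term this
is the set `[t]` of its values, independent of `v`). `opFun` gives the partial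
integer function denoted by each operation name. -/
def Term.val {C O : Type} (opFun : O → List ℤ → Option ℤ) (v : Val C) :
    Term C O → Set (Pre C)
  | .num n => {Pre.num n}
  | .sym c => {Pre.sym c}
  | .var x => {v x}
  | .inf => {Pre.inf}
  | .sup => {Pre.sup}
  | .app f ts => {r | ∃ rs : List (Pre C), Term.vals opFun v ts rs ∧ r = Pre.app f rs}
  | .op o ts => {r | ∃ ks : List ℤ, Term.vals opFun v ts (ks.map Pre.num) ∧
      ∃ m : ℤ, opFun o ks = some m ∧ r = Pre.num m}
  | .interval t₁ t₂ => {r | ∃ k₁ k₂ m : ℤ, Pre.num k₁ ∈ Term.val opFun v t₁ ∧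
      Pre.num k₂ ∈ Term.val opFun v t₂ ∧ k₁ ≤ m ∧ m ≤ k₂ ∧ r = Pre.num m}

/-- `Term.vals opFun v ts rs` : the tuple `rs` of precomputed terms is a tuple of
values of the tuple `ts` of terms (componentwise). -/
def Term.vals {C O : Type} (opFun : O → List ℤ → Option ℤ) (v : Val C) :
    List (Term C O) → List (Pre C) → Prop
  | [], rs => rs = []
  | t :: ts, rs => ∃ r rs', rs = r :: rs' ∧ r ∈ Term.val opFun v t ∧ Term.vals opFun v ts rs'
end

mutual
/-- Embedding of precomputed terms into terms. -/
def Pre.toTerm {C O : Type} : Pre C → Term C O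
  | .inf => .inf
  | .sup => .sup
  | .num n => .num n
  | .sym c => .sym c
  | .app f rs => .app f (Pre.toTermL rs)

def Pre.toTermL {C O : Type} : List (Pre C) → List (Term C O)
  | [] => []
  | r :: rs => Pre.toTerm r :: Pre.toTermL rs
end


/-! ### Formulas with aggregates -/

mutual
/-- Arguments of the extended (aggregate) language. -/
inductive AArg (C O A : Type) : Type where
  | num (n : ℤ)
  | sym (c : C)
  | var (x : ℕ)
  | inf
  | sup
  | app (f : C) (args : List (AArg C O A))
  | agg (a : A) (xs : List ℕ) (F : AFml C O A)

/-- Formulas of the extended (aggregate) first-order language over the domain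
of precomputed terms. -/
inductive AFml (C O A : Type) : Type where
  | atom (p : C) (args : List (AArg C O A))
  | cmp (rel : Rel) (a₁ a₂ : AArg C O A)
  | mem (a : AArg C O A) (t : Term C O)
  | bot
  | impl (F G : AFml C O A)
  | all (x : ℕ) (F : AFml C O A)
end

section Sem
variable {C O A : Type}
variable (opFun : O → List ℤ → Option ℤ)
variable (aggFun : A → Set (List (Pre C)) → Pre C)
variable (lt : Pre C → Pre C → Prop)

mutual
/-- The precomputed term denoted by an argument (joint recursion with `AFml.sat`). -/
def AArg.eval (I : Interp C) : Val C → AArg C O A → Pre C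
  | _, .num n => Pre.num n
  | _, .sym c => Pre.sym c
  | v, .var x => v x
  | _, .inf => Pre.inf
  | _, .sup => Pre.sup
  | v, .app f args => Pre.app f (AArg.evalL I v args)
  | v, .agg a xs F => aggFun a
      {rs : List (Pre C) | rs.length = xs.length ∧ AFml.sat I (updList v xs rs) F}

def AArg.evalL (I : Interp C) : Val C → List (AArg C O A) → List (Pre C)
  | _, [] => []
  | v, a :: as => AArg.eval I v a :: AArg.evalL I v as

/-- Satisfaction of a formula by an interpretation `I` under a valuation `v`. -/
def AFml.sat (I : Interp C) : Val C → AFml C O A → Prop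
  | v, .atom p args => (p, AArg.evalL I v args) ∈ I
  | v, .cmp rel a₁ a₂ => Rel.eval lt rel (AArg.eval I v a₁) (AArg.eval I v a₂)
  | v, .mem a t => AArg.eval I v a ∈ Term.val opFun v t
  | _, .bot => False
  | v, .impl F G => AFml.sat I v F → AFml.sat I v G
  | v, .all x F => ∀ r : Pre C, AFml.sat I (Function.update v x r) F
end

end Sem
/-! ### Infinitary propositional formulas -/

/-- Infinitary propositional formulas over a type `α` of atoms: atoms, `⊥`,
conjunctions and disjunctions of arbitrary families of formulas, implication. -/
inductive IForm (α : Type) : Type 1 where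
  | atom (a : α)
  | bot
  | conj (ι : Type) (f : ι → IForm α)
  | disj (ι : Type) (f : ι → IForm α)
  | impl (F G : IForm α)

namespace IForm

variable {α : Type}

/-- `⊤` as the empty conjunction. -/
def top : IForm α := conj Empty (fun e => e.elim)
def neg (F : IForm α) : IForm α := impl F bot
def and (F G : IForm α) : IForm α := conj Bool (fun b => cond b F G)
def or (F G : IForm α) : IForm α := disj Bool (fun b => cond b F G)
def conjList (l : List (IForm α)) : IForm α := conj (Fin l.length) (fun i => l.get i)

/-- Classical satisfaction of infinitary formulas. -/
def sat (I : Set α) : IForm α → Prop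
  | atom a => a ∈ I
  | bot => False
  | conj _ f => ∀ i, sat I (f i)
  | disj _ f => ∃ i, sat I (f i)
  | impl F G => sat I F → sat I G

open Classical in
/-- The Ferraris reduct of an infinitary formula relative to an interpretation:
every (maximal) subformula not satisfied by `I` is replaced by `⊥`. -/
noncomputable def reduct (I : Set α) : IForm α → IForm α
  | atom a => if a ∈ I then atom a else bot
  | bot => bot
  | conj ι f => conj ι (fun i => reduct I (f i))
  | disj ι f => disj ι (fun i => reduct I (f i))
  | impl F G => if sat I (impl F G) then impl (reduct I F) (reduct I G) else bot

/-- `I` is a stable model of `F` (Ferraris semantics for infinitary formulas):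
`I` is a minimal model of the reduct `F^I`. -/
def stable (I : Set α) (F : IForm α) : Prop :=
  sat I (reduct I F) ∧ ∀ J : Set α, J ⊆ I → sat J (reduct I F) → J = I

/-- Satisfaction in the infinitary logic of here-and-there `HT^∞`, for an
HT-interpretation given by `J ⊆ I` ("here" `J`, "there" `I`). -/
def satHT (J I : Set α) : IForm α → Prop
  | atom a => a ∈ J
  | bot => False
  | conj _ f => ∀ i, satHT J I (f i)
  | disj _ f => ∃ i, satHT J I (f i)
  | impl F G => (satHT J I F → satHT J I G) ∧ (sat I F → sat I G)

/-- Strong equivalence of infinitary formulas, i.e. equivalence in `HT^∞`. -/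
def HTEquiv (F G : IForm α) : Prop :=
  ∀ J I : Set α, J ⊆ I → (satHT J I F ↔ satHT J I G) ∧ (sat I F ↔ sat I G)

mutual
/-- Positive nonnegated atoms of an infinitary formula. -/
def Pnn : IForm α → Set α
  | atom a => {a}
  | bot => ∅
  | conj _ f => ⋃ i, Pnn (f i)
  | disj _ f => ⋃ i, Pnn (f i)
  | impl _ bot => ∅
  | impl G H => Nnn G ∪ Pnn H

/-- Negative nonnegated atoms of an infinitary formula. -/
def Nnn : IForm α → Set α
  | atom _ => ∅
  | bot => ∅
  | conj _ f => ⋃ i, Nnn (f i)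
  | disj _ f => ⋃ i, Nnn (f i)
  | impl _ bot => ∅
  | impl G H => Pnn G ∪ Nnn H
end

end IForm

/-! ### Infinitary programs -/

/-- An infinitary rule `F → A`. -/
structure IRule (α : Type) : Type 1 where
  body : IForm α
  head : α

/-- An infinitary program: a conjunction (represented as a set) of infinitary rules. -/
abbrev IProg (α : Type) := Set (IRule α)

def IRule.toForm {α : Type} (r : IRule α) : IForm α := .impl r.body (.atom r.head)

namespace IProg
variable {α : Type}

/-- `I` satisfies the program (i.e., the conjunction of its rules). -/
def sat (I : Set α) (P : IProg α) : Prop := ∀ r ∈ P, IForm.sat I r.toForm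

/-- `I` is a stable model of the program, i.e., of the conjunction of its rules:
`I` is a minimal model of the reduct of that conjunction. -/
def stable (I : Set α) (P : IProg α) : Prop :=
  (∀ r ∈ P, IForm.sat I (IForm.reduct I r.toForm)) ∧
  ∀ J : Set α, J ⊆ I → (∀ r ∈ P, IForm.sat J (IForm.reduct I r.toForm)) → J = I

/-- `I` is supported by the program. -/
def supported (I : Set α) (P : IProg α) : Prop :=
  ∀ a ∈ I, ∃ r ∈ P, r.head = a ∧ IForm.sat I r.body

/-- `I` satisfies the completion of `P`, with signature (set of atoms) `S`:
the conjunction over all atoms `A ∈ S` of `A ↔ ⋁ (P|_A)`. -/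
def satCompletionOn (S : Set α) (I : Set α) (P : IProg α) : Prop :=
  ∀ a ∈ S, (a ∈ I ↔ ∃ r ∈ P, r.head = a ∧ IForm.sat I r.body)

/-- `B` is a parent of `A` relative to `P` and `I`. -/
def parent (P : IProg α) (I : Set α) (B A : α) : Prop :=
  A ∈ I ∧ B ∈ I ∧ ∃ r ∈ P, r.head = A ∧ IForm.sat I r.body ∧ B ∈ IForm.Pnn r.body

/-- `P` is tight on `I`: there is no infinite sequence of elements of `I` in
which each element is followed by one of its parents. -/
def tightOn (P : IProg α) (I : Set α) : Prop :=
  ¬ ∃ f : ℕ → α, (∀ i, f i ∈ I) ∧ ∀ i, parent P I (f (i + 1)) (f i)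

end IProg
/-! ### Programs -/

/-- A literal: an atom `p(t₁,…,tₙ)` (`pos = true`) or such an atom preceded
by `not` (`pos = false`). -/
structure Lit (C O : Type) : Type where
  pos : Bool
  pred : C
  args : List (Term C O)

/-- A comparison `t₁ ≺ t₂`. -/
structure Comp (C O : Type) : Type where
  rel : Rel
  lhs : Term C O
  rhs : Term C O

/-- An element of the condition of an aggregate expression: a literal or comparison. -/
abbrev CondElem (C O : Type) := Lit C O ⊕ Comp C O

def Lit.varList {C O : Type} (l : Lit C O) : List ℕ := Term.varListL l.args
def Comp.varList {C O : Type} (c : Comp C O) : List ℕ := c.lhs.varList ++ c.rhs.varList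
def CondElem.varList {C O : Type} : CondElem C O → List ℕ :=
  Sum.elim Lit.varList Comp.varList

/-- An aggregate expression `α{t : C} ≺ s`, where `s` is a variable or a
precomputed term. -/
structure AggExpr (C O A : Type) : Type where
  name : A
  ts : List (Term C O)
  cond : List (CondElem C O)
  rel : Rel
  bound : ℕ ⊕ Pre C

def AggExpr.lhsVarList {C O A : Type} (E : AggExpr C O A) : List ℕ :=
  Term.varListL E.ts ++ E.cond.flatMap CondElem.varList

def boundVarList {C : Type} : ℕ ⊕ Pre C → List ℕ
  | .inl x => [x]
  | .inr _ => []

def AggExpr.varList {C O A : Type} (E : AggExpr C O A) : List ℕ :=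
  E.lhsVarList ++ boundVarList E.bound

/-- An aggregate expression is closed if its bound `s` is ground
(i.e., a precomputed term). -/
def AggExpr.ClosedBound {C O A : Type} (E : AggExpr C O A) : Prop :=
  ∃ r : Pre C, E.bound = Sum.inr r

/-- A conjunctive term of a rule body. -/
inductive BElem (C O A : Type) : Type where
  | lit (l : Lit C O)
  | comp (c : Comp C O)
  | agg (E : AggExpr C O A)

def BElem.varList {C O A : Type} : BElem C O A → List ℕ
  | .lit l => l.varList
  | .comp c => c.varList
  | .agg E => E.varList

/-- A body element suitable for the translation `τ`: a ground literal,
a ground comparison, or a closed aggregate expression. -/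
def BElem.ClosedC {C O A : Type} : BElem C O A → Prop
  | .lit l => l.varList = []
  | .comp c => c.varList = []
  | .agg E => E.ClosedBound

/-- The head of a rule. -/
inductive Head (C O : Type) : Type where
  | basic (p : C) (ts : List (Term C O))
  | choice (p : C) (ts : List (Term C O))
  | empty

def Head.varList {C O : Type} : Head C O → List ℕ
  | .basic _ ts => Term.varListL ts
  | .choice _ ts => Term.varListL ts
  | .empty => []

/-- A rule `Head ← Body`. -/
structure Rule (C O A : Type) : Type where
  head : Head C O
  body : List (BElem C O A)

def Rule.varList {C O A : Type} (R : Rule C O A) : List ℕ :=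
  R.head.varList ++ R.body.flatMap BElem.varList

/-- The variables with an occurrence in the rule outside the left-hand sides
`α{t : C}` of aggregate expressions (head, literal and comparison conjuncts,
and bounds of aggregate expressions); these are the global variables. -/
def Rule.globalList {C O A : Type} (R : Rule C O A) : List ℕ :=
  (R.head.varList ++ R.body.flatMap (fun b =>
    match b with
    | .lit l => l.varList
    | .comp c => c.varList
    | .agg E => boundVarList E.bound)).dedup

/-- The local variables of a rule: those occurring in the rule, all of whose
occurrences are inside left-hand sides of aggregate expressions of its body. -/
def Rule.localList {C O A : Type} (R : Rule C O A) : List ℕ :=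
  ((R.body.flatMap (fun b =>
    match b with
    | .agg E => E.lhsVarList
    | _ => [])).dedup).filter (fun x => x ∉ R.globalList)

/-- A rule is closed if all its variables are local. -/
def Rule.Closed {C O A : Type} (R : Rule C O A) : Prop := R.globalList = []

/-! ### Predicate symbol occurrences, vocabulary, dependency graph -/

def Lit.hasPred {C O : Type} (p : C) (n : ℕ) (l : Lit C O) : Prop :=
  l.pred = p ∧ l.args.length = n

def CondElem.hasPred {C O : Type} (p : C) (n : ℕ) : CondElem C O → Prop
  | .inl l => l.hasPred p n
  | .inr _ => False

def AggExpr.hasPred {C O A : Type} (p : C) (n : ℕ) (E : AggExpr C O A) : Prop :=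
  ∃ ce ∈ E.cond, CondElem.hasPred p n ce

/-- The predicate symbol `p/n` occurs in a body element. -/
def BElem.hasPred {C O A : Type} (p : C) (n : ℕ) : BElem C O A → Prop
  | .lit l => l.hasPred p n
  | .comp _ => False
  | .agg E => E.hasPred p n

/-- The predicate symbol `p/n` occurs in a positive literal or in an aggregate
expression (condition (ii′)). -/
def BElem.hasPosOrAggPred {C O A : Type} (p : C) (n : ℕ) : BElem C O A → Prop
  | .lit l => l.pos = true ∧ l.hasPred p n
  | .comp _ => False
  | .agg E => E.hasPred p n

def Head.hasPred {C O : Type} (p : C) (n : ℕ) : Head C O → Prop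
  | .basic q ts => q = p ∧ ts.length = n
  | .choice q ts => q = p ∧ ts.length = n
  | .empty => False

/-- The predicate symbol `p/n` occurs in the rule `R`. -/
def Rule.hasPredSym {C O A : Type} (p : C) (n : ℕ) (R : Rule C O A) : Prop :=
  R.head.hasPred p n ∨ ∃ e ∈ R.body, BElem.hasPred p n e

/-- The vocabulary of a program: all atoms `p(r)` with `r` a tuple of `n`
precomputed terms and `p/n` occurring in the program. -/
def vocab {C O A : Type} (Γ : Set (Rule C O A)) : Set (EGAtom C) :=
  {a | ∃ R ∈ Γ, Rule.hasPredSym a.1 a.2.length R}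

/-- The edge relation of the dependency graph `G_Γ` on predicate symbols. -/
def DepEdge {C O A : Type} (Γ : Set (Rule C O A)) (q p : C × ℕ) : Prop :=
  ∃ R ∈ Γ, R.head.hasPred q.1 q.2 ∧ ∃ e ∈ R.body, BElem.hasPosOrAggPred p.1 p.2 e

/-- A program is tight if its dependency graph is acyclic. -/
def EGTight {C O A : Type} (Γ : Set (Rule C O A)) : Prop :=
  ∀ s : C × ℕ, ¬ Relation.TransGen (DepEdge Γ) s s


/-! ### Embeddings and aggregate-freeness -/

mutual
/-- Embedding of precomputed terms into arguments of the extended language. -/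
def Pre.toAArg {C O A : Type} : Pre C → AArg C O A
  | .inf => .inf
  | .sup => .sup
  | .num n => .num n
  | .sym c => .sym c
  | .app f rs => .app f (Pre.toAArgL rs)

def Pre.toAArgL {C O A : Type} : List (Pre C) → List (AArg C O A)
  | [] => []
  | r :: rs => Pre.toAArg r :: Pre.toAArgL rs
end

mutual
/-- The number of occurrences of aggregate names in an argument;
an argument is aggregate-free iff this is `0`. -/
def AArg.countAgg {C O A : Type} : AArg C O A → ℕ
  | .num _ => 0
  | .sym _ => 0
  | .var _ => 0
  | .inf => 0
  | .sup => 0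
  | .app _ args => AArg.countAggL args
  | .agg _ _ F => F.countAgg + 1

def AArg.countAggL {C O A : Type} : List (AArg C O A) → ℕ
  | [] => 0
  | a :: as => a.countAgg + AArg.countAggL as

def AFml.countAgg {C O A : Type} : AFml C O A → ℕ
  | .atom _ args => AArg.countAggL args
  | .cmp _ a₁ a₂ => a₁.countAgg + a₂.countAgg
  | .mem a _ => a.countAgg
  | .bot => 0
  | .impl F G => F.countAgg + G.countAgg
  | .all _ F => F.countAgg
end

/-- An argument contains no aggregate names. -/
def AArg.AggFree {C O A : Type} (a : AArg C O A) : Prop := a.countAgg = 0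

mutual
/-- An aggregate-free argument, viewed as a term (the `agg` case is junk and
is never relevant for aggregate-free arguments). -/
def AArg.toTerm {C O A : Type} : AArg C O A → Term C O
  | .num n => .num n
  | .sym c => .sym c
  | .var x => .var x
  | .inf => .inf
  | .sup => .sup
  | .app f args => .app f (AArg.toTermL args)
  | .agg _ _ _ => .inf

def AArg.toTermL {C O A : Type} : List (AArg C O A) → List (Term C O)
  | [] => []
  | a :: as => a.toTerm :: AArg.toTermL as
end

/-! ### Abbreviated connectives of the extended first-order language -/

namespace AFml
variable {C O A : Type}

def negF (F : AFml C O A) : AFml C O A := .impl F .bot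
def topF : AFml C O A := negF .bot
def andF (F G : AFml C O A) : AFml C O A := .impl (.impl F (.impl G .bot)) .bot
def orF (F G : AFml C O A) : AFml C O A := .impl (negF F) G
def iffF (F G : AFml C O A) : AFml C O A := andF (.impl F G) (.impl G F)
def exF (x : ℕ) (F : AFml C O A) : AFml C O A := negF (.all x (negF F))
def andList (l : List (AFml C O A)) : AFml C O A := l.foldr andF topF
def orList (l : List (AFml C O A)) : AFml C O A := l.foldr orF .bot
def exList (xs : List ℕ) (F : AFml C O A) : AFml C O A := xs.foldr exF F
def allList (xs : List ℕ) (F : AFml C O A) : AFml C O A := xs.foldr .all F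

end AFml

/-! ### The translation φ (formula representations) -/

/-- A variable index strictly greater than every element of `l`
(used to pick new/fresh variables). -/
def freshVar (l : List ℕ) : ℕ := l.foldr max 0 + 1

/-- The bound `s` of an aggregate expression, as a term. -/
def boundTerm {C O : Type} : ℕ ⊕ Pre C → Term C O
  | .inl x => .var x
  | .inr r => r.toTerm

section Phi
variable {C O A : Type}

/-- `φ` of a literal: `∃X(X ∈ t ∧ p(X))`, resp. `∃X(X ∈ t ∧ ¬p(X))`,
with `X` a tuple of new variables. -/
def phiLit (l : Lit C O) : AFml C O A :=
  let n := freshVar l.varList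
  let ws := (List.range l.args.length).map (· + n)
  AFml.exList ws (AFml.andF
    (AFml.andList ((ws.zip l.args).map (fun q => AFml.mem (AArg.var q.1) q.2)))
    (if l.pos then AFml.atom l.pred (ws.map AArg.var)
     else AFml.negF (AFml.atom l.pred (ws.map AArg.var))))

/-- `φ` of a comparison: `∃X₁X₂(X₁ ∈ t₁ ∧ X₂ ∈ t₂ ∧ X₁ ≺ X₂)`. -/
def phiComp (c : Comp C O) : AFml C O A :=
  let n := freshVar c.varList
  AFml.exF n (AFml.exF (n + 1) (AFml.andF (AFml.mem (AArg.var n) c.lhs)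
    (AFml.andF (AFml.mem (AArg.var (n + 1)) c.rhs)
      (AFml.cmp c.rel (AArg.var n) (AArg.var (n + 1))))))

def phiCondElem : CondElem C O → AFml C O A :=
  Sum.elim phiLit phiComp

/-- `φ` of a conjunction of literals and comparisons. -/
def phiCond (cond : List (CondElem C O)) : AFml C O A :=
  AFml.andList (cond.map phiCondElem)

/-- `φ^X` of an aggregate expression `α{t : C} ≺ s` (with `X = xs` the
variables treated as local):
`∃Y(α{Z | ∃X(Z ∈ t ∧ φC)} ≺ Y ∧ Y ∈ s)`, with `Z`, `Y` new variables. -/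
def phiAgg (xs : List ℕ) (E : AggExpr C O A) : AFml C O A :=
  let n := freshVar (xs ++ E.varList)
  let zs := (List.range E.ts.length).map (· + (n + 1))
  AFml.exF n (AFml.andF
    (AFml.cmp E.rel
      (AArg.agg E.name zs
        (AFml.exList xs (AFml.andF
          (AFml.andList ((zs.zip E.ts).map (fun q => AFml.mem (AArg.var q.1) q.2)))
          (phiCond E.cond))))
      (AArg.var n))
    (AFml.mem (AArg.var n) (boundTerm E.bound)))

/-- `φ^X` of a body element, where `xs` is the list of variables treated as local. -/
def phiBElem (xs : List ℕ) : BElem C O A → AFml C O A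
  | .lit l => phiLit l
  | .comp c => phiComp c
  | .agg E => phiAgg xs E

/-- `φ^X` of a body (a conjunction of literals, comparisons and aggregate
expressions), where `xs` is the list of variables treated as local. -/
def phiBody (xs : List ℕ) (b : List (BElem C O A)) : AFml C O A :=
  AFml.andList (b.map (phiBElem xs))

/-- The formula representation of a constraint `← Body`: `¬ φ^X(Body)`,
where `X` is the list of local variables of the constraint. -/
def phiConstraintRep (R : Rule C O A) : AFml C O A :=
  AFml.negF (phiBody R.localList R.body)

/-- `V ∈ t` for a tuple `V` of variables and a tuple `t` of terms. -/
def memConj (Vs : List ℕ) (ts : List (Term C O)) : AFml C O A :=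
  AFml.andList ((Vs.zip ts).map (fun q => AFml.mem (AArg.var q.1) q.2))

/-- The antecedent `Fᵢ` of the formula representation `Fᵢ → p(V)` of a basic or
choice rule, where `Vs` is the chosen tuple `V` of new variables:
for a basic rule `V ∈ t ∧ φ^X(Body)`, for a choice rule
`V ∈ t ∧ φ^X(Body) ∧ p(V)`, with `X` the local variables of the rule. -/
def ruleAnte (Vs : List ℕ) (R : Rule C O A) : AFml C O A :=
  match R.head with
  | .basic _ ts => AFml.andF (memConj Vs ts) (phiBody R.localList R.body)
  | .choice p ts => AFml.andF (memConj Vs ts)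
      (AFml.andF (phiBody R.localList R.body) (AFml.atom p (Vs.map AArg.var)))
  | .empty => AFml.bot

/-- Does `R` belong to the definition of `p/n` (a basic or choice rule whose
head is of the form `p(t₁,…,tₙ)` or `{p(t₁,…,tₙ)}`)? -/
def definesB [DecidableEq C] (p : C) (n : ℕ) (R : Rule C O A) : Bool :=
  match R.head with
  | .basic q ts => decide (q = p ∧ ts.length = n)
  | .choice q ts => decide (q = p ∧ ts.length = n)
  | .empty => false

/-- The completed definition of the predicate symbol `p/n` in the finite
program `Γ`: `∀V(p(V) ↔ ⋁ᵢ ∃Uᵢ Fᵢ)`, where the `Fᵢ` come from the formula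
representations of the rules defining `p/n`, `V` is a tuple of new variables
chosen in the same way for all `i`, and `Uᵢ` is the list of free variables of
`Fᵢ` not in `V` (i.e., the global variables of the corresponding rule). -/
def completedDef [DecidableEq C] (Γ : List (Rule C O A)) (p : C) (n : ℕ) : AFml C O A :=
  let base := freshVar (Γ.flatMap Rule.varList)
  let Vs := (List.range n).map (· + base)
  AFml.allList Vs (AFml.iffF (AFml.atom p (Vs.map AArg.var))
    (AFml.orList ((Γ.filter (definesB p n)).map
      (fun R => AFml.exList R.globalList (ruleAnte Vs R)))))

end Phi

/-! ### The translation τ (grounding into infinitary formulas) -/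

section Tau
variable {C O A : Type}
variable (opFun : O → List ℤ → Option ℤ)
variable (aggFun : A → Set (List (Pre C)) → Pre C)
variable (lt : Pre C → Pre C → Prop)

/-- `τ` of a (ground instance of a) literal: `⋁_{r ∈ [t]} p(r)`, resp.
`⋁_{r ∈ [t]} ¬p(r)`; variables are evaluated by the valuation `v`. -/
def tauLit (v : Val C) (l : Lit C O) : IForm (EGAtom C) :=
  if l.pos then
    .disj {rs : List (Pre C) // Term.vals opFun v l.args rs}
      (fun rs => .atom (l.pred, rs.val))
  else
    .disj {rs : List (Pre C) // Term.vals opFun v l.args rs}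
      (fun rs => .neg (.atom (l.pred, rs.val)))

open Classical in
/-- `τ` of a (ground instance of a) comparison: `⊤` if the relation holds
between some values of the two terms, `⊥` otherwise. -/
noncomputable def tauComp (v : Val C) (c : Comp C O) : IForm (EGAtom C) :=
  if ∃ r₁ ∈ Term.val opFun v c.lhs, ∃ r₂ ∈ Term.val opFun v c.rhs,
      Rel.eval lt c.rel r₁ r₂
  then .top else .bot

noncomputable def tauCondElem (v : Val C) : CondElem C O → IForm (EGAtom C)
  | .inl l => tauLit opFun v l
  | .inr c => tauComp opFun lt v c

/-- `τ` of a conjunction of (ground instances of) literals and comparisons. -/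
noncomputable def tauCond (v : Val C) (cond : List (CondElem C O)) : IForm (EGAtom C) :=
  IForm.conjList (cond.map (tauCondElem opFun lt v))

/-- The value of the bound `s` of an aggregate expression under a valuation. -/
def boundVal (v : Val C) : ℕ ⊕ Pre C → Pre C
  | .inl x => v x
  | .inr r => r

/-- Tuples of precomputed terms matching the variable list `xs`. -/
def AggTuple (C : Type) (xs : List ℕ) : Type := {rs : List (Pre C) // rs.length = xs.length}

/-- `Δ` justifies the aggregate expression `E` (relative to the valuation `v`
and the list `xs` of its variables): `≺` holds between `α̂([Δ])` and `s`,
where `[Δ]` is the union of the value sets of the instantiated tuples `t`. -/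
def Justifies (v : Val C) (xs : List ℕ) (E : AggExpr C O A)
    (Δ : Set (AggTuple C xs)) : Prop :=
  Rel.eval lt E.rel
    (aggFun E.name
      {q | ∃ rs ∈ Δ, Term.vals opFun (updList v xs rs.val) E.ts q})
    (boundVal v E.bound)

/-- `τ` of a closed aggregate expression `E`, relative to the list `xs` of its
variables: the conjunction, over all subsets `Δ` of the set `A` of tuples of
precomputed terms matching `xs` that do not justify `E`, of the implications
`(⋀_{r∈Δ} τ(C^X_r)) → (⋁_{r∈A∖Δ} τ(C^X_r))`. -/
noncomputable def tauAgg (v : Val C) (xs : List ℕ) (E : AggExpr C O A) :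
    IForm (EGAtom C) :=
  .conj {Δ : Set (AggTuple C xs) // ¬ Justifies opFun aggFun lt v xs E Δ}
    (fun Δ => .impl
      (.conj {rs : AggTuple C xs // rs ∈ Δ.val}
        (fun rs => tauCond opFun lt (updList v xs rs.val.val) E.cond))
      (.disj {rs : AggTuple C xs // rs ∉ Δ.val}
        (fun rs => tauCond opFun lt (updList v xs rs.val.val) E.cond)))

/-- `τ` of a closed aggregate expression, with `X` the list of variables
occurring in it. -/
noncomputable def tauAggE (v : Val C) (E : AggExpr C O A) : IForm (EGAtom C) :=
  tauAgg opFun aggFun lt v (E.varList.dedup) E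

/-- `τ` of a body element of (an instance of) a rule whose list of local
variables is `loc`; in the instance, the variables occurring in an aggregate
expression `E` are the variables of `E` that are local in the rule. -/
noncomputable def tauBElem (v : Val C) (loc : List ℕ) : BElem C O A → IForm (EGAtom C)
  | .lit l => tauLit opFun v l
  | .comp c => tauComp opFun lt v c
  | .agg E => tauAgg opFun aggFun lt v (E.varList.dedup.filter (· ∈ loc)) E

/-- `τ` of the body of (an instance of) a rule with local variable list `loc`. -/
noncomputable def tauBody (v : Val C) (loc : List ℕ) (b : List (BElem C O A)) :
    IForm (EGAtom C) :=
  IForm.conjList (b.map (tauBElem opFun aggFun lt v loc))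

/-- `τ` of (an instance, given by the valuation `v`, of) a rule. -/
noncomputable def tauRule (v : Val C) (R : Rule C O A) : IForm (EGAtom C) :=
  match R.head with
  | .basic p ts => .impl (tauBody opFun aggFun lt v R.localList R.body)
      (.conj {rs : List (Pre C) // Term.vals opFun v ts rs}
        (fun rs => .atom (p, rs.val)))
  | .choice p ts => .impl (tauBody opFun aggFun lt v R.localList R.body)
      (.conj {rs : List (Pre C) // Term.vals opFun v ts rs}
        (fun rs => .or (.atom (p, rs.val)) (.neg (.atom (p, rs.val)))))
  | .empty => .neg (tauBody opFun aggFun lt v R.localList R.body)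

/-- `τΓ`: the conjunction of `τR` over all instances `R` of the rules of `Γ`
(instances given by valuations of the global variables). -/
noncomputable def tauProg (Γ : Set (Rule C O A)) : IForm (EGAtom C) :=
  .conj ({R : Rule C O A // R ∈ Γ} × Val C)
    (fun z => tauRule opFun aggFun lt z.2 z.1.val)

/-- Stable models of an EG program: stable models of `τΓ`. -/
noncomputable def EGStable (I : Interp C) (Γ : Set (Rule C O A)) : Prop :=
  IForm.stable I (tauProg opFun aggFun lt Γ)

/-- The infinitary program `τ₁Γ`: the rules `τ(Body) → p(r)` for all instances
of basic rules of `Γ` and all `r ∈ [t]`, together with the rules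
`τ(Body) ∧ ¬¬p(r) → p(r)` for all instances of choice rules and all `r ∈ [t]`. -/
noncomputable def tau1 (Γ : Set (Rule C O A)) : IProg (EGAtom C) :=
  {ir | ∃ R ∈ Γ, ∃ v : Val C,
    (∃ p ts rs, R.head = Head.basic p ts ∧ Term.vals opFun v ts rs ∧
      ir = ⟨tauBody opFun aggFun lt v R.localList R.body, (p, rs)⟩) ∨
    (∃ p ts rs, R.head = Head.choice p ts ∧ Term.vals opFun v ts rs ∧
      ir = ⟨IForm.and (tauBody opFun aggFun lt v R.localList R.body)
              (IForm.neg (IForm.neg (IForm.atom (p, rs)))), (p, rs)⟩)}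

/-- The infinitary formula `τ₂Γ`: the conjunction of `¬τ(C)` over all
instances `← C` of the constraints of `Γ`. -/
noncomputable def tau2 (Γ : Set (Rule C O A)) : IForm (EGAtom C) :=
  .conj ({R : Rule C O A // R ∈ Γ ∧ R.head = Head.empty} × Val C)
    (fun z => .neg (tauBody opFun aggFun lt z.2 z.1.val.localList z.1.val.body))

/-- `τ` of a closed conjunction of ground literals, ground comparisons and
closed aggregate expressions (each aggregate expression translated relative
to the list of its own variables). -/
noncomputable def tauBElemC (v : Val C) : BElem C O A → IForm (EGAtom C)
  | .lit l => tauLit opFun v l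
  | .comp c => tauComp opFun lt v c
  | .agg E => tauAggE opFun aggFun lt v E

noncomputable def tauBodyC (v : Val C) (b : List (BElem C O A)) : IForm (EGAtom C) :=
  IForm.conjList (b.map (tauBElemC opFun aggFun lt v))

end Tau

/-! ### Completion of an EG program -/

section Completion
variable {C O A : Type}
variable (opFun : O → List ℤ → Option ℤ)
variable (aggFun : A → Set (List (Pre C)) → Pre C)
variable (lt : Pre C → Pre C → Prop)

/-- `I` satisfies the completion of the finite program `Γ`: the completed
definitions of all predicate symbols occurring in `Γ` together with the
universal closures of the formula representations of all constraints of `Γ`. -/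
def SatCompletion [DecidableEq C] (Γ : List (Rule C O A)) (I : Interp C) : Prop :=
  (∀ (p : C) (n : ℕ), (∃ R ∈ Γ, Rule.hasPredSym p n R) →
    ∀ v : Val C, AFml.sat opFun aggFun lt I v (completedDef Γ p n)) ∧
  (∀ R ∈ Γ, R.head = Head.empty →
    ∀ v : Val C, AFml.sat opFun aggFun lt I v (phiConstraintRep R))

end Completion



/-! ### Proof development -/

open Classical

namespace IForm
variable {α : Type}

theorem sat_impl_iff (I : Set α) (F G : IForm α) :
    sat I (impl F G) ↔ (sat I F → sat I G) := Iff.rfl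

theorem sat_conj_iff (I : Set α) (ι : Type) (f : ι → IForm α) :
    sat I (conj ι f) ↔ ∀ i, sat I (f i) := Iff.rfl

theorem sat_disj_iff (I : Set α) (ι : Type) (f : ι → IForm α) :
    sat I (disj ι f) ↔ ∃ i, sat I (f i) := Iff.rfl

open Classical in
theorem reduct_impl (I : Set α) (F G : IForm α) :
    reduct I (impl F G) = if sat I (impl F G) then impl (reduct I F) (reduct I G) else bot := by
  rw [reduct]

open Classical in
theorem reduct_atom (I : Set α) (a : α) :
    reduct I (atom a) = if a ∈ I then atom a else bot := by
  rw [reduct]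

theorem reduct_conj (I : Set α) (ι : Type) (f : ι → IForm α) :
    reduct I (conj ι f) = conj ι (fun i => reduct I (f i)) := by rw [reduct]

theorem reduct_disj (I : Set α) (ι : Type) (f : ι → IForm α) :
    reduct I (disj ι f) = disj ι (fun i => reduct I (f i)) := by rw [reduct]

theorem reduct_bot (I : Set α) : reduct I (bot : IForm α) = bot := by rw [reduct]

theorem sat_reduct_iff (I : Set α) : ∀ F : IForm α, sat I (reduct I F) ↔ sat I F := by
  intro F
  induction F with
  | atom a =>
      by_cases h : a ∈ I
      · rw [reduct_atom, if_pos h]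
      · rw [reduct_atom, if_neg h]; exact iff_of_false (fun h' => h') h
  | bot => exact Iff.rfl
  | conj ι f ih => rw [reduct_conj]; exact forall_congr' fun i => ih i
  | disj ι f ih => rw [reduct_disj]; exact exists_congr fun i => ih i
  | impl F G ihF ihG =>
      by_cases h : sat I (impl F G)
      · rw [reduct_impl, if_pos h]
        constructor
        · intro _; exact h
        · intro _ hF; exact ihG.2 (h (ihF.1 hF))
      · rw [reduct_impl, if_neg h]
        exact iff_of_false (fun h' => h') h

theorem sat_reduct_mono {J I : Set α} (hJI : J ⊆ I) : ∀ F : IForm α, sat J (reduct I F) → sat I F := by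
  intro F
  induction F with
  | atom a =>
      by_cases h : a ∈ I
      · intro _; exact h
      · rw [reduct_atom, if_neg h]; exact fun h' => h'.elim
  | bot => exact fun h => h
  | conj ι f ih => rw [reduct_conj]; intro h i; exact ih i (h i)
  | disj ι f ih => rw [reduct_disj]; intro ⟨i, hi⟩; exact ⟨i, ih i hi⟩
  | impl F G ihF ihG =>
      by_cases h : sat I (impl F G)
      · intro _; exact h
      · rw [reduct_impl, if_neg h]; exact fun h' => h'.elim

end IForm

section Proof
variable {C O A : Type}
variable (opFun : O → List ℤ → Option ℤ)
variable (aggFun : A → Set (List (Pre C)) → Pre C)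
variable (lt : Pre C → Pre C → Prop)

theorem stable_sat_rules {Γ : Set (Rule C O A)} {I : Interp C}
    (h : EGStable opFun aggFun lt I Γ) :
    ∀ R ∈ Γ, ∀ v : Val C, IForm.sat I (tauRule opFun aggFun lt v R) := by
  intro R hR v
  have h1 := h.1
  rw [IForm.sat_reduct_iff] at h1
  exact h1 ⟨⟨R, hR⟩, v⟩

theorem stable_constraints {Γ : Set (Rule C O A)} {I : Interp C}
    (h : EGStable opFun aggFun lt I Γ) :
    ∀ R ∈ Γ, R.head = Head.empty → ∀ v : Val C,
      ¬ IForm.sat I (tauBody opFun aggFun lt v R.localList R.body) := by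
  intro R hR hE v hsat
  have := stable_sat_rules opFun aggFun lt h R hR v
  rw [tauRule, hE] at this
  exact this hsat

private theorem rule_fail {I J : Interp C} (hJI : J ⊆ I) {v : Val C} {R : Rule C O A}
    (hsatI : IForm.sat I (IForm.reduct I (tauRule opFun aggFun lt v R)))
    (hfail : ¬ IForm.sat J (IForm.reduct I (tauRule opFun aggFun lt v R))) :
    IForm.sat I (tauBody opFun aggFun lt v R.localList R.body) ∧
    ∃ p ts rs, (R.head = Head.basic p ts ∨ R.head = Head.choice p ts) ∧
      Term.vals opFun v ts rs ∧ (p, rs) ∈ I ∧ (p, rs) ∉ J := by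
  rcases hhead : R.head with ⟨p, ts⟩ | ⟨p, ts⟩ | _
  · simp only [tauRule, hhead] at hsatI hfail
    by_cases hI : IForm.sat I (IForm.impl (tauBody opFun aggFun lt v R.localList R.body)
        (IForm.conj {rs : List (Pre C) // Term.vals opFun v ts rs}
          (fun rs => IForm.atom (p, rs.val))))
    · rw [IForm.reduct_impl, if_pos hI] at hfail
      rw [IForm.sat_impl_iff, Classical.not_imp] at hfail
      obtain ⟨hbody, hcon⟩ := hfail
      have hbI : IForm.sat I (tauBody opFun aggFun lt v R.localList R.body) :=
        IForm.sat_reduct_mono hJI _ hbody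
      rw [IForm.reduct_conj, IForm.sat_conj_iff] at hcon
      push_neg at hcon
      obtain ⟨rs, hrs⟩ := hcon
      have hmem : (p, rs.val) ∈ I := hI hbI rs
      rw [IForm.reduct_atom, if_pos hmem] at hrs
      exact ⟨hbI, p, ts, rs.val, Or.inl rfl, rs.prop, hmem, hrs⟩
    · rw [IForm.reduct_impl, if_neg hI] at hsatI
      exact absurd hsatI (fun h => h)
  · simp only [tauRule, hhead] at hsatI hfail
    by_cases hI : IForm.sat I (IForm.impl (tauBody opFun aggFun lt v R.localList R.body)
        (IForm.conj {rs : List (Pre C) // Term.vals opFun v ts rs}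
          (fun rs => IForm.or (IForm.atom (p, rs.val)) (IForm.neg (IForm.atom (p, rs.val))))))
    · rw [IForm.reduct_impl, if_pos hI] at hfail
      rw [IForm.sat_impl_iff, Classical.not_imp] at hfail
      obtain ⟨hbody, hcon⟩ := hfail
      have hbI : IForm.sat I (tauBody opFun aggFun lt v R.localList R.body) :=
        IForm.sat_reduct_mono hJI _ hbody
      rw [IForm.reduct_conj, IForm.sat_conj_iff] at hcon
      push_neg at hcon
      obtain ⟨rs, hrs⟩ := hcon
      rw [IForm.or, IForm.reduct_disj, IForm.sat_disj_iff] at hrs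
      push_neg at hrs
      by_cases hmem : (p, rs.val) ∈ I
      · refine ⟨hbI, p, ts, rs.val, Or.inr rfl, rs.prop, hmem, ?_⟩
        intro hJ
        apply hrs true
        show IForm.sat J (IForm.reduct I (IForm.atom (p, rs.val)))
        rw [IForm.reduct_atom, if_pos hmem]
        exact hJ
      · exfalso
        apply hrs false
        show IForm.sat J (IForm.reduct I (IForm.neg (IForm.atom (p, rs.val))))
        have hnegI : IForm.sat I (IForm.impl (IForm.atom (p, rs.val)) IForm.bot) := fun h => hmem h
        rw [IForm.neg, IForm.reduct_impl, if_pos hnegI]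
        intro hb
        rw [IForm.reduct_atom, if_neg hmem] at hb
        exact hb.elim
    · rw [IForm.reduct_impl, if_neg hI] at hsatI
      exact absurd hsatI (fun h => h)
  · exfalso
    simp only [tauRule, hhead, IForm.neg] at hsatI hfail
    by_cases hI : IForm.sat I (IForm.impl (tauBody opFun aggFun lt v R.localList R.body) IForm.bot)
    · rw [IForm.reduct_impl, if_pos hI] at hfail
      rw [IForm.sat_impl_iff, Classical.not_imp] at hfail
      exact hI (IForm.sat_reduct_mono hJI _ hfail.1)
    · rw [IForm.reduct_impl, if_neg hI] at hsatI
      exact hsatI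

theorem stable_support {Γ : Set (Rule C O A)} {I : Interp C}
    (h : EGStable opFun aggFun lt I Γ) :
    ∀ a ∈ I, ∃ R ∈ Γ, ∃ v : Val C,
      IForm.sat I (tauBody opFun aggFun lt v R.localList R.body) ∧
      ∃ ts, (R.head = Head.basic a.1 ts ∨ R.head = Head.choice a.1 ts) ∧
        Term.vals opFun v ts a.2 := by
  intro a ha
  have hJI : I \ {a} ⊆ I := Set.diff_subset
  have hne : I \ {a} ≠ I := by
    intro hEq
    have : a ∈ I \ {a} := hEq.symm ▸ ha
    exact this.2 rfl
  have hns : ¬ IForm.sat (I \ {a}) (IForm.reduct I (tauProg opFun aggFun lt Γ)) := by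
    intro hsat
    exact hne (h.2 _ hJI hsat)
  rw [tauProg, IForm.reduct_conj, IForm.sat_conj_iff] at hns
  push_neg at hns
  obtain ⟨⟨⟨R, hR⟩, v⟩, hfailz⟩ := hns
  have hsatI : IForm.sat I (IForm.reduct I (tauRule opFun aggFun lt v R)) := by
    have h1 := h.1
    rw [tauProg, IForm.reduct_conj, IForm.sat_conj_iff] at h1
    exact h1 ⟨⟨R, hR⟩, v⟩
  obtain ⟨hbody, p, ts, rs, hh, hvals, hmem, hnmem⟩ :=
    rule_fail opFun aggFun lt hJI hsatI hfailz
  have hpa : (p, rs) = a := by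
    by_contra hne'
    exact hnmem ⟨hmem, hne'⟩
  subst hpa
  exact ⟨R, hR, v, hbody, ts, hh, hvals⟩

/-! #### Valuation update lemmas -/

/-- `u` and `w` agree outside `xs`. -/
def EqOff (xs : List ℕ) (u w : Val C) : Prop := ∀ y, y ∉ xs → u y = w y

theorem updList_notMem (v : Val C) :
    ∀ (xs : List ℕ) (rs : List (Pre C)) {y : ℕ}, y ∉ xs → updList v xs rs y = v y
  | [], _, _, _ => rfl
  | _ :: _, [], _, _ => rfl
  | x :: xs, r :: rs, y, h => by
      have h' : y ≠ x ∧ y ∉ xs := by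
        rw [List.mem_cons] at h; push_neg at h; exact h
      rw [updList, Function.update_of_ne h'.1]
      exact updList_notMem v xs rs h'.2

theorem eqOff_updList (v : Val C) (xs : List ℕ) (rs : List (Pre C)) :
    EqOff xs v (updList v xs rs) := fun _ hy => (updList_notMem v xs rs hy).symm

theorem updList_congr {u w : Val C} :
    ∀ (xs : List ℕ) (rs : List (Pre C)), rs.length = xs.length →
      ∀ y, (y ∈ xs ∨ u y = w y) → updList u xs rs y = updList w xs rs y
  | [], [], _, y, h => by
      rcases h with h | h
      · exact absurd h List.not_mem_nil
      · exact h
  | x :: xs, r :: rs, hlen, y, h => by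
      by_cases hyx : y = x
      · subst hyx
        rw [updList, updList, Function.update_self, Function.update_self]
      · rw [updList, updList, Function.update_of_ne hyx, Function.update_of_ne hyx]
        refine updList_congr xs rs (by simpa using hlen) y ?_
        rcases h with h | h
        · rcases List.mem_cons.1 h with h' | h'
          · exact absurd h' hyx
          · exact Or.inl h'
        · exact Or.inr h

theorem updList_map_self (v : Val C) :
    ∀ (xs : List ℕ), xs.Nodup → ∀ (rs : List (Pre C)), rs.length = xs.length →
      xs.map (updList v xs rs) = rs
  | [], _, [], _ => rfl
  | x :: xs, hnd, r :: rs, hlen => by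
      rw [List.nodup_cons] at hnd
      rw [List.map_cons, updList, Function.update_self]
      congr 1
      rw [List.map_congr_left (g := updList v xs rs) ?_]
      · exact updList_map_self v xs hnd.2 rs (by simpa using hlen)
      · intro y hy
        exact Function.update_of_ne (fun hyx : y = x => hnd.1 (hyx ▸ hy)) _ _

theorem updList_apply_mem (v u : Val C) :
    ∀ (xs : List ℕ), xs.Nodup → ∀ y ∈ xs, updList v xs (xs.map u) y = u y
  | x :: xs, hnd, y, hy => by
      rw [List.nodup_cons] at hnd
      rw [List.map_cons, updList]
      by_cases hyx : y = x
      · subst hyx; rw [Function.update_self]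
      · rw [Function.update_of_ne hyx]
        exact updList_apply_mem v u xs hnd.2 y (List.mem_cons.1 hy |>.resolve_left hyx)

/-! #### Fresh variables -/

theorem le_foldr_max : ∀ {l : List ℕ} {x : ℕ}, x ∈ l → x ≤ l.foldr max 0
  | a :: l, x, hx => by
      rcases List.mem_cons.1 hx with h | h
      · subst h; exact le_max_left _ _
      · exact le_trans (le_foldr_max h) (le_max_right _ _)

theorem freshVar_gt {l : List ℕ} {x : ℕ} (hx : x ∈ l) : x < freshVar l :=
  Nat.lt_succ_of_le (le_foldr_max hx)

/-! #### Satisfaction of abbreviated connectives -/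

variable {I : Interp C}

theorem sat_negF {v : Val C} {F : AFml C O A} :
    AFml.sat opFun aggFun lt I v (AFml.negF F) ↔ ¬ AFml.sat opFun aggFun lt I v F := by
  simp [AFml.negF, AFml.sat]

theorem sat_andF {v : Val C} {F G : AFml C O A} :
    AFml.sat opFun aggFun lt I v (AFml.andF F G) ↔
      (AFml.sat opFun aggFun lt I v F ∧ AFml.sat opFun aggFun lt I v G) := by
  simp only [AFml.andF, AFml.sat]
  tauto

theorem sat_orF {v : Val C} {F G : AFml C O A} :
    AFml.sat opFun aggFun lt I v (AFml.orF F G) ↔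
      (AFml.sat opFun aggFun lt I v F ∨ AFml.sat opFun aggFun lt I v G) := by
  simp only [AFml.orF, AFml.negF, AFml.sat]
  tauto

theorem sat_iffF {v : Val C} {F G : AFml C O A} :
    AFml.sat opFun aggFun lt I v (AFml.iffF F G) ↔
      (AFml.sat opFun aggFun lt I v F ↔ AFml.sat opFun aggFun lt I v G) := by
  simp only [AFml.iffF, sat_andF, AFml.sat]
  tauto

theorem sat_andList {v : Val C} :
    ∀ {L : List (AFml C O A)}, AFml.sat opFun aggFun lt I v (AFml.andList L) ↔
      ∀ F ∈ L, AFml.sat opFun aggFun lt I v F := by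
  intro L
  induction L with
  | nil => simp [AFml.andList, AFml.topF, sat_negF, AFml.sat]
  | cons F L ih =>
      simp only [AFml.andList, List.foldr_cons] at *
      rw [sat_andF, ih]
      simp

theorem sat_orList {v : Val C} :
    ∀ {L : List (AFml C O A)}, AFml.sat opFun aggFun lt I v (AFml.orList L) ↔
      ∃ F ∈ L, AFml.sat opFun aggFun lt I v F := by
  intro L
  induction L with
  | nil => simp [AFml.orList, AFml.sat]
  | cons F L ih =>
      simp only [AFml.orList, List.foldr_cons] at *
      rw [sat_orF, ih]
      simp

theorem sat_exF {v : Val C} {x : ℕ} {F : AFml C O A} :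
    AFml.sat opFun aggFun lt I v (AFml.exF x F) ↔
      ∃ r : Pre C, AFml.sat opFun aggFun lt I (Function.update v x r) F := by
  rw [AFml.exF, sat_negF]
  rw [show AFml.sat opFun aggFun lt I v (AFml.all x (AFml.negF F)) ↔
    (∀ r, AFml.sat opFun aggFun lt I (Function.update v x r) (AFml.negF F)) from Iff.rfl]
  push_neg
  constructor
  · rintro ⟨r, hr⟩
    rw [sat_negF, not_not] at hr
    exact ⟨r, hr⟩
  · rintro ⟨r, hr⟩
    exact ⟨r, by rw [sat_negF, not_not]; exact hr⟩

theorem eqOff_cons {x : ℕ} {xs : List ℕ} {u w : Val C} (h : EqOff (x :: xs) u w)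
    (hx : u x = w x) : EqOff xs u w := by
  intro y hy
  by_cases hyx : y = x
  · subst hyx; exact hx
  · exact h y (by simp [hyx, hy])

theorem sat_exList {F : AFml C O A} :
    ∀ (xs : List ℕ) (v : Val C), AFml.sat opFun aggFun lt I v (AFml.exList xs F) ↔
      ∃ w : Val C, EqOff xs v w ∧ AFml.sat opFun aggFun lt I w F := by
  intro xs
  induction xs with
  | nil =>
      intro v
      constructor
      · exact fun h => ⟨v, fun _ _ => rfl, h⟩
      · rintro ⟨w, hw, hsat⟩
        have : v = w := funext fun y => hw y List.not_mem_nil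
        rw [this]; exact hsat
  | cons x xs ih =>
      intro v
      simp only [AFml.exList, List.foldr_cons]
      rw [show List.foldr AFml.exF F xs = AFml.exList xs F from rfl] at *
      rw [sat_exF]
      constructor
      · rintro ⟨r, hr⟩
        obtain ⟨w, hw, hsat⟩ := (ih (Function.update v x r)).1 hr
        refine ⟨w, ?_, hsat⟩
        intro y hy
        have h' : y ≠ x ∧ y ∉ xs := by rw [List.mem_cons] at hy; push_neg at hy; exact hy
        rw [← hw y h'.2, Function.update_of_ne h'.1]
      · rintro ⟨w, hw, hsat⟩
        refine ⟨w x, (ih _).2 ⟨w, ?_, hsat⟩⟩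
        intro y hy
        by_cases hyx : y = x
        · subst hyx; rw [Function.update_self]
        · rw [Function.update_of_ne hyx]
          exact hw y (by simp [hyx, hy])

theorem sat_allList {F : AFml C O A} :
    ∀ (xs : List ℕ) (v : Val C), AFml.sat opFun aggFun lt I v (AFml.allList xs F) ↔
      ∀ w : Val C, EqOff xs v w → AFml.sat opFun aggFun lt I w F := by
  intro xs
  induction xs with
  | nil =>
      intro v
      constructor
      · intro h w hw
        have : v = w := funext fun y => hw y List.not_mem_nil
        rw [← this]; exact h
      · exact fun h => h v fun _ _ => rfl
  | cons x xs ih =>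
      intro v
      simp only [AFml.allList, List.foldr_cons]
      rw [show List.foldr AFml.all F xs = AFml.allList xs F from rfl] at *
      rw [show AFml.sat opFun aggFun lt I v (AFml.all x (AFml.allList xs F)) ↔
        (∀ r, AFml.sat opFun aggFun lt I (Function.update v x r) (AFml.allList xs F)) from Iff.rfl]
      constructor
      · intro h w hw
        refine (ih (Function.update v x (w x))).1 (h (w x)) w ?_
        intro y hy
        by_cases hyx : y = x
        · subst hyx; rw [Function.update_self]
        · rw [Function.update_of_ne hyx]
          exact hw y (by simp [hyx, hy])
      · intro h r
        refine (ih _).2 ?_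
        intro w hw
        refine h w ?_
        intro y hy
        have h' : y ≠ x ∧ y ∉ xs := by rw [List.mem_cons] at hy; push_neg at hy; exact hy
        rw [← hw y h'.2, Function.update_of_ne h'.1]

theorem sat_conjList {I' : Set (EGAtom C)} :
    ∀ {L : List (IForm (EGAtom C))}, IForm.sat I' (IForm.conjList L) ↔
      ∀ F ∈ L, IForm.sat I' F := by
  intro L
  constructor
  · intro h F hF
    obtain ⟨i, hi⟩ := List.mem_iff_get.1 hF
    rw [← hi]; exact h i
  · intro h i
    exact h (L.get i) (List.get_mem L i)

/-! #### Term value lemmas -/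

mutual
theorem Term.val_congr {u w : Val C} :
    ∀ t : Term C O, (∀ x ∈ t.varList, u x = w x) →
      Term.val opFun u t = Term.val opFun w t
  | .num n, _ => rfl
  | .sym c, _ => rfl
  | .var x, h => by
      rw [Term.val, Term.val, h x (by simp [Term.varList])]
  | .inf, _ => rfl
  | .sup, _ => rfl
  | .app f ts, h => by
      rw [Term.val, Term.val]
      ext r
      simp only [Set.mem_setOf_eq]
      exact exists_congr fun rs => and_congr_left' (Term.vals_congr ts (by simpa [Term.varList] using h) rs)
  | .op o ts, h => by
      rw [Term.val, Term.val]
      ext r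
      simp only [Set.mem_setOf_eq]
      exact exists_congr fun ks => and_congr_left' (Term.vals_congr ts (by simpa [Term.varList] using h) _)
  | .interval t₁ t₂, h => by
      rw [Term.val, Term.val]
      have h₁ : ∀ x ∈ t₁.varList, u x = w x := fun x hx => h x (by simp [Term.varList, hx])
      have h₂ : ∀ x ∈ t₂.varList, u x = w x := fun x hx => h x (by simp [Term.varList, hx])
      rw [Term.val_congr t₁ h₁, Term.val_congr t₂ h₂]

theorem Term.vals_congr {u w : Val C} :
    ∀ ts : List (Term C O), (∀ x ∈ Term.varListL ts, u x = w x) →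
      ∀ rs, (Term.vals opFun u ts rs ↔ Term.vals opFun w ts rs)
  | [], _, rs => Iff.rfl
  | t :: ts, h, rs => by
      rw [Term.vals, Term.vals]
      refine exists_congr fun r => exists_congr fun rs' => and_congr_right fun _ => ?_
      rw [Term.val_congr t (fun x hx => h x (by simp [Term.varListL, hx])),
        Term.vals_congr ts (fun x hx => h x (by simp [Term.varListL, hx])) rs']
end

theorem Term.vals_iff {u : Val C} :
    ∀ (ts : List (Term C O)) (rs : List (Pre C)),
      Term.vals opFun u ts rs ↔
        (rs.length = ts.length ∧ ∀ q ∈ rs.zip ts, q.1 ∈ Term.val opFun u q.2) := by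
  intro ts
  induction ts with
  | nil =>
      intro rs
      rw [Term.vals]
      simp [List.length_eq_zero_iff]
  | cons t ts ih =>
      intro rs
      rw [Term.vals]
      constructor
      · rintro ⟨r, rs', rfl, hr, hvals⟩
        obtain ⟨hlen, hall⟩ := (ih rs').1 hvals
        refine ⟨by simp [hlen], ?_⟩
        intro q hq
        rcases List.mem_cons.1 (by simpa [List.zip_cons_cons] using hq) with h' | h'
        · subst h'; exact hr
        · exact hall q h'
      · rintro ⟨hlen, hall⟩
        rcases rs with _ | ⟨r, rs'⟩
        · simp at hlen
        · refine ⟨r, rs', rfl, hall (r, t) (by simp [List.zip_cons_cons]), (ih rs').2 ⟨by simpa using hlen, ?_⟩⟩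
          intro q hq
          exact hall q (by simp [List.zip_cons_cons, hq])

theorem Term.vals_length {u : Val C} {ts : List (Term C O)} {rs : List (Pre C)}
    (h : Term.vals opFun u ts rs) : rs.length = ts.length :=
  ((Term.vals_iff opFun ts rs).1 h).1

theorem Term.vals_map_iff {u u' : Val C} {ws : List ℕ} {ts : List (Term C O)}
    (hlen : ws.length = ts.length) :
    Term.vals opFun u' ts (ws.map u) ↔ ∀ q ∈ ws.zip ts, u q.1 ∈ Term.val opFun u' q.2 := by
  rw [Term.vals_iff]
  constructor
  · rintro ⟨-, hall⟩ q hq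
    refine hall (u q.1, q.2) ?_
    rw [List.zip_map_left]
    exact List.mem_map.2 ⟨q, hq, rfl⟩
  · intro hall
    refine ⟨by simp [hlen], ?_⟩
    intro q hq
    rw [List.zip_map_left] at hq
    obtain ⟨q', hq', rfl⟩ := List.mem_map.1 hq
    exact hall q' hq'

mutual
theorem Pre.val_toTerm (v : Val C) :
    ∀ r : Pre C, Term.val opFun v (Pre.toTerm r : Term C O) = {r}
  | .inf => rfl
  | .sup => rfl
  | .num n => rfl
  | .sym c => rfl
  | .app f rs => by
      rw [Pre.toTerm, Term.val]
      ext r'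
      simp only [Set.mem_setOf_eq, Set.mem_singleton_iff]
      constructor
      · rintro ⟨rs', hrs', rfl⟩
        rw [(Pre.vals_toTermL v rs rs').1 hrs']
      · rintro rfl
        exact ⟨rs, (Pre.vals_toTermL v rs rs).2 rfl, rfl⟩

theorem Pre.vals_toTermL (v : Val C) :
    ∀ (rs : List (Pre C)) (rs' : List (Pre C)),
      Term.vals opFun v (Pre.toTermL rs : List (Term C O)) rs' ↔ rs' = rs
  | [], rs' => by rw [Pre.toTermL, Term.vals]
  | r :: rs, rs' => by
      rw [Pre.toTermL, Term.vals]
      constructor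
      · rintro ⟨r', rs'', rfl, hr', hrs''⟩
        rw [Pre.val_toTerm v r] at hr'
        rw [Set.mem_singleton_iff] at hr'
        rw [hr', (Pre.vals_toTermL v rs rs'').1 hrs'']
      · rintro rfl
        exact ⟨r, rs, rfl, by rw [Pre.val_toTerm v r]; rfl,
          (Pre.vals_toTermL v rs rs).2 rfl⟩
end

theorem evalL_map_var {I : Interp C} (v : Val C) :
    ∀ L : List ℕ, AArg.evalL opFun aggFun lt I v (L.map AArg.var) = L.map v
  | [] => rfl
  | x :: L => by
      rw [List.map_cons, AArg.evalL, AArg.eval, List.map_cons, evalL_map_var v L]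

/-! #### tau-side lemmas -/

theorem sat_tauLit {I : Interp C} {u : Val C} {l : Lit C O} :
    IForm.sat I (tauLit opFun u l) ↔
      ∃ rs, Term.vals opFun u l.args rs ∧
        (if l.pos then ((l.pred, rs) ∈ I) else ((l.pred, rs) ∉ I)) := by
  cases hp : l.pos
  · rw [tauLit, if_neg (by simp [hp]), IForm.sat_disj_iff]
    simp only [hp, if_neg Bool.false_ne_true]
    constructor
    · rintro ⟨⟨rs, hrs⟩, hs⟩
      exact ⟨rs, hrs, fun hmem => (hs hmem).elim⟩
    · rintro ⟨rs, hrs, hs⟩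
      exact ⟨⟨rs, hrs⟩, fun hmem => hs hmem⟩
  · rw [tauLit, if_pos (by simp [hp]), IForm.sat_disj_iff]
    simp only [hp, if_pos rfl]
    constructor
    · rintro ⟨⟨rs, hrs⟩, hs⟩
      exact ⟨rs, hrs, hs⟩
    · rintro ⟨rs, hrs, hs⟩
      exact ⟨⟨rs, hrs⟩, hs⟩

theorem sat_tauComp {I : Interp C} {u : Val C} {c : Comp C O} :
    IForm.sat I (tauComp opFun lt u c) ↔
      ∃ r₁ ∈ Term.val opFun u c.lhs, ∃ r₂ ∈ Term.val opFun u c.rhs,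
        Rel.eval lt c.rel r₁ r₂ := by
  by_cases h : ∃ r₁ ∈ Term.val opFun u c.lhs, ∃ r₂ ∈ Term.val opFun u c.rhs,
      Rel.eval lt c.rel r₁ r₂
  · rw [tauComp, if_pos h]
    exact iff_of_true (fun i => i.elim) h
  · rw [tauComp, if_neg h]
    exact iff_of_false (fun hf => hf) h

theorem tauLit_congr {u w : Val C} (l : Lit C O) (h : ∀ x ∈ l.varList, u x = w x) :
    tauLit opFun u l = tauLit opFun w l := by
  have hv : Term.vals opFun u l.args = Term.vals opFun w l.args :=
    funext fun rs => propext (Term.vals_congr opFun l.args h rs)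
  rw [tauLit, tauLit, hv]

theorem tauComp_congr {u w : Val C} (c : Comp C O) (h : ∀ x ∈ c.varList, u x = w x) :
    tauComp opFun lt u c = tauComp opFun lt w c := by
  have h1 : Term.val opFun u c.lhs = Term.val opFun w c.lhs :=
    Term.val_congr opFun c.lhs (fun x hx => h x (by simp [Comp.varList, hx]))
  have h2 : Term.val opFun u c.rhs = Term.val opFun w c.rhs :=
    Term.val_congr opFun c.rhs (fun x hx => h x (by simp [Comp.varList, hx]))
  rw [tauComp, tauComp, h1, h2]

theorem tauCond_congr {u w : Val C} (cond : List (CondElem C O))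
    (h : ∀ x ∈ cond.flatMap CondElem.varList, u x = w x) :
    tauCond opFun lt u cond = tauCond opFun lt w cond := by
  rw [tauCond, tauCond]
  congr 1
  refine List.map_congr_left ?_
  intro ce hce
  have hce' : ∀ x ∈ CondElem.varList ce, u x = w x :=
    fun x hx => h x (List.mem_flatMap.2 ⟨ce, hce, hx⟩)
  cases ce with
  | inl l => rw [tauCondElem, tauCondElem]; exact tauLit_congr opFun l hce'
  | inr c => rw [tauCondElem, tauCondElem]; exact tauComp_congr opFun lt c hce'

theorem sat_tauCond {I : Interp C} {v : Val C} {cond : List (CondElem C O)} :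
    IForm.sat I (tauCond opFun lt v cond) ↔
      ∀ ce ∈ cond, IForm.sat I (tauCondElem opFun lt v ce) := by
  rw [tauCond, sat_conjList]
  constructor
  · intro h ce hce
    exact h _ (List.mem_map.2 ⟨ce, hce, rfl⟩)
  · rintro h F hF
    obtain ⟨ce, hce, rfl⟩ := List.mem_map.1 hF
    exact h ce hce

theorem sat_tauAgg {I : Interp C} {v : Val C} {xs : List ℕ} {E : AggExpr C O A} :
    IForm.sat I (tauAgg opFun aggFun lt v xs E) ↔
      Justifies opFun aggFun lt v xs E
        {rs : AggTuple C xs | IForm.sat I (tauCond opFun lt (updList v xs rs.val) E.cond)} := by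
  rw [tauAgg, IForm.sat_conj_iff]
  constructor
  · intro hsat
    by_contra hnj
    have h1 := hsat ⟨_, hnj⟩
    rw [IForm.sat_impl_iff, IForm.sat_conj_iff, IForm.sat_disj_iff] at h1
    obtain ⟨rs, hrs⟩ := h1 (fun rs => rs.prop)
    exact rs.prop hrs
  · rintro hj ⟨Δ, hΔ⟩
    rw [IForm.sat_impl_iff, IForm.sat_conj_iff, IForm.sat_disj_iff]
    intro hprem
    have hsub : Δ ⊆ {rs : AggTuple C xs |
        IForm.sat I (tauCond opFun lt (updList v xs rs.val) E.cond)} :=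
      fun rs hrs => hprem ⟨rs, hrs⟩
    have hne : Δ ≠ {rs : AggTuple C xs |
        IForm.sat I (tauCond opFun lt (updList v xs rs.val) E.cond)} := by
      intro hEq
      rw [hEq] at hΔ
      exact hΔ hj
    obtain ⟨rs, hrs1, hrs2⟩ : ∃ rs, rs ∈ {rs : AggTuple C xs |
        IForm.sat I (tauCond opFun lt (updList v xs rs.val) E.cond)} ∧ rs ∉ Δ := by
      by_contra hc
      push_neg at hc
      exact hne (Set.Subset.antisymm hsub hc)
    exact ⟨⟨rs, hrs2⟩, hrs1⟩

/-! #### Global/local variable structure of a rule -/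

theorem Rule.localList_nodup (R : Rule C O A) : R.localList.Nodup :=
  (List.nodup_dedup _).filter _

theorem Rule.globalList_nodup (R : Rule C O A) : R.globalList.Nodup :=
  List.nodup_dedup _

theorem global_of_lit {R : Rule C O A} {l : Lit C O} (he : BElem.lit l ∈ R.body) :
    ∀ x ∈ l.varList, x ∈ R.globalList := by
  intro x hx
  rw [Rule.globalList, List.mem_dedup, List.mem_append]
  exact Or.inr (List.mem_flatMap.2 ⟨BElem.lit l, he, hx⟩)

theorem global_of_comp {R : Rule C O A} {c : Comp C O} (he : BElem.comp c ∈ R.body) :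
    ∀ x ∈ c.varList, x ∈ R.globalList := by
  intro x hx
  rw [Rule.globalList, List.mem_dedup, List.mem_append]
  exact Or.inr (List.mem_flatMap.2 ⟨BElem.comp c, he, hx⟩)

theorem global_of_bound {R : Rule C O A} {E : AggExpr C O A} (he : BElem.agg E ∈ R.body)
    {x : ℕ} (hx : x ∈ boundVarList E.bound) : x ∈ R.globalList := by
  rw [Rule.globalList, List.mem_dedup, List.mem_append]
  exact Or.inr (List.mem_flatMap.2 ⟨BElem.agg E, he, hx⟩)

theorem global_of_agglhs {R : Rule C O A} {E : AggExpr C O A} (he : BElem.agg E ∈ R.body)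
    {x : ℕ} (hx : x ∈ E.lhsVarList) (hnl : x ∉ R.localList) : x ∈ R.globalList := by
  by_contra hg
  refine hnl (List.mem_filter.2 ⟨List.mem_dedup.2 (List.mem_flatMap.2 ⟨BElem.agg E, he, hx⟩), ?_⟩)
  simpa using hg

theorem global_of_aggvar {R : Rule C O A} {E : AggExpr C O A} (he : BElem.agg E ∈ R.body)
    {x : ℕ} (hx : x ∈ E.varList) (hnl : x ∉ R.localList) : x ∈ R.globalList := by
  rw [AggExpr.varList, List.mem_append] at hx
  rcases hx with hx | hx
  · exact global_of_agglhs he hx hnl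
  · exact global_of_bound he hx

theorem head_var_global {R : Rule C O A} : ∀ x ∈ R.head.varList, x ∈ R.globalList := by
  intro x hx
  rw [Rule.globalList, List.mem_dedup, List.mem_append]
  exact Or.inl hx

theorem global_not_local {R : Rule C O A} {x : ℕ} (hx : x ∈ R.globalList) :
    x ∉ R.localList := by
  intro hl
  have := (List.mem_filter.1 hl).2
  simp at this
  exact this hx

theorem ts_var_sub {E : AggExpr C O A} {x : ℕ} (hx : x ∈ Term.varListL E.ts) :
    x ∈ E.varList := by
  rw [AggExpr.varList, AggExpr.lhsVarList, List.mem_append, List.mem_append]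
  exact Or.inl (Or.inl hx)

theorem cond_var_sub {E : AggExpr C O A} {x : ℕ}
    (hx : x ∈ E.cond.flatMap CondElem.varList) : x ∈ E.varList := by
  rw [AggExpr.varList, AggExpr.lhsVarList, List.mem_append, List.mem_append]
  exact Or.inl (Or.inr hx)

theorem bound_var_sub {E : AggExpr C O A} {x : ℕ} (hx : x ∈ boundVarList E.bound) :
    x ∈ E.varList := by
  rw [AggExpr.varList, List.mem_append]
  exact Or.inr hx

theorem mem_aggxs {E : AggExpr C O A} {loc : List ℕ} {x : ℕ} (hx : x ∈ E.varList)
    (hl : x ∈ loc) : x ∈ E.varList.dedup.filter (· ∈ loc) :=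
  List.mem_filter.2 ⟨List.mem_dedup.2 hx, by simpa using hl⟩

theorem aggxs_sub_loc {E : AggExpr C O A} {loc : List ℕ} {x : ℕ}
    (hx : x ∈ E.varList.dedup.filter (· ∈ loc)) : x ∈ loc := by
  have := (List.mem_filter.1 hx).2
  simpa using this

theorem aggxs_sub_var {E : AggExpr C O A} {loc : List ℕ} {x : ℕ}
    (hx : x ∈ E.varList.dedup.filter (· ∈ loc)) : x ∈ E.varList :=
  List.mem_dedup.1 (List.mem_filter.1 hx).1

theorem aggxs_nodup (E : AggExpr C O A) (loc : List ℕ) :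
    (E.varList.dedup.filter (· ∈ loc)).Nodup :=
  (List.nodup_dedup _).filter _

/-! #### phi/tau correspondence -/

theorem mem_shift_range {k n w : ℕ} (hw : w ∈ (List.range k).map (· + n)) : n ≤ w := by
  obtain ⟨i, hi, rfl⟩ := List.mem_map.1 hw
  omega

theorem nodup_shift_range (k n : ℕ) : ((List.range k).map (· + n)).Nodup :=
  (List.nodup_range : (List.range k).Nodup).map (fun a b h => by omega)

theorem sat_mem_var {I : Interp C} {v : Val C} {x : ℕ} {t : Term C O} :
    AFml.sat opFun aggFun lt I v (AFml.mem (AArg.var x) t) ↔ v x ∈ Term.val opFun v t := by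
  simp [AFml.sat, AArg.eval]

theorem sat_atom_vars {I : Interp C} {v : Val C} {p : C} {ws : List ℕ} :
    AFml.sat opFun aggFun lt I v (AFml.atom p (ws.map AArg.var)) ↔ (p, ws.map v) ∈ I := by
  rw [show AFml.sat opFun aggFun lt I v (AFml.atom p (ws.map AArg.var)) ↔
    (p, AArg.evalL opFun aggFun lt I v (ws.map AArg.var)) ∈ I from Iff.rfl]
  rw [evalL_map_var]

theorem sat_phiLit {I : Interp C} {u : Val C} {l : Lit C O} :
    AFml.sat opFun aggFun lt I u (phiLit l) ↔ IForm.sat I (tauLit opFun u l) := by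
  rw [sat_tauLit opFun]
  set n := freshVar l.varList with hn
  set ws := (List.range l.args.length).map (· + n) with hws
  have hnd : ws.Nodup := nodup_shift_range _ _
  have hlen : ws.length = l.args.length := by simp [hws]
  have hdisj : ∀ x ∈ l.varList, x ∉ ws := by
    intro x hx hxw
    have h1 := mem_shift_range hxw
    have h2 := freshVar_gt hx
    omega
  rw [show phiLit l = AFml.exList ws (AFml.andF
    (AFml.andList ((ws.zip l.args).map (fun q => AFml.mem (AArg.var q.1) q.2)))
    (if l.pos then AFml.atom l.pred (ws.map AArg.var)
     else AFml.negF (AFml.atom l.pred (ws.map AArg.var)))) from rfl]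
  rw [sat_exList]
  constructor
  · rintro ⟨w, hw, hsat⟩
    rw [sat_andF] at hsat
    obtain ⟨hmems, hatom⟩ := hsat
    rw [sat_andList] at hmems
    have hmems' : ∀ q ∈ ws.zip l.args, w q.1 ∈ Term.val opFun w q.2 := by
      intro q hq
      have := hmems _ (List.mem_map.2 ⟨q, hq, rfl⟩)
      rwa [sat_mem_var] at this
    have hvals : Term.vals opFun w l.args (ws.map w) := (Term.vals_map_iff opFun hlen).2 hmems'
    have hvals' : Term.vals opFun u l.args (ws.map w) := by
      refine (Term.vals_congr opFun l.args ?_ _).2 hvals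
      intro x hx
      exact hw x (hdisj x hx)
    refine ⟨ws.map w, hvals', ?_⟩
    cases hp : l.pos
    · rw [if_neg (by simp)]
      rw [if_neg (by simp [hp])] at hatom
      rw [sat_negF, sat_atom_vars] at hatom
      exact hatom
    · rw [if_pos rfl]
      rw [if_pos (by simp [hp])] at hatom
      rw [sat_atom_vars] at hatom
      exact hatom
  · rintro ⟨rs, hvals, hmem⟩
    have hlen2 : rs.length = ws.length := (Term.vals_length opFun hvals).trans hlen.symm
    refine ⟨updList u ws rs, eqOff_updList u ws rs, ?_⟩
    have hmap : ws.map (updList u ws rs) = rs := updList_map_self u ws hnd rs hlen2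
    have hvals2 : Term.vals opFun (updList u ws rs) l.args rs := by
      refine (Term.vals_congr opFun l.args ?_ _).1 hvals
      intro x hx
      exact (updList_notMem u ws rs (hdisj x hx)).symm
    rw [sat_andF]
    constructor
    · rw [sat_andList]
      intro F hF
      obtain ⟨q, hq, rfl⟩ := List.mem_map.1 hF
      rw [sat_mem_var]
      have := (Term.vals_map_iff opFun hlen).1 (by rw [hmap]; exact hvals2)
      exact this q hq
    · cases hp : l.pos
      · rw [if_neg (by simp [hp])] at hmem ⊢
        rw [sat_negF, sat_atom_vars, hmap]
        exact hmem
      · rw [if_pos (by simp [hp])] at hmem ⊢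
        rw [sat_atom_vars, hmap]
        exact hmem

theorem sat_phiComp {I : Interp C} {u : Val C} {c : Comp C O} :
    AFml.sat opFun aggFun lt I u (phiComp c) ↔ IForm.sat I (tauComp opFun lt u c) := by
  rw [sat_tauComp]
  set n := freshVar c.varList with hn
  have hlhs : ∀ x ∈ c.lhs.varList, x < n := fun x hx => freshVar_gt (by
    rw [Comp.varList, List.mem_append]; exact Or.inl hx)
  have hrhs : ∀ x ∈ c.rhs.varList, x < n := fun x hx => freshVar_gt (by
    rw [Comp.varList, List.mem_append]; exact Or.inr hx)
  rw [show phiComp c = AFml.exF n (AFml.exF (n + 1) (AFml.andF (AFml.mem (AArg.var n) c.lhs)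
    (AFml.andF (AFml.mem (AArg.var (n + 1)) c.rhs)
      (AFml.cmp c.rel (AArg.var n) (AArg.var (n + 1)))))) from rfl]
  rw [sat_exF]
  have key : ∀ r₁ r₂ : Pre C,
      (AFml.sat opFun aggFun lt I (Function.update (Function.update u n r₁) (n+1) r₂)
        (AFml.andF (AFml.mem (AArg.var n) c.lhs)
          (AFml.andF (AFml.mem (AArg.var (n + 1)) c.rhs)
            (AFml.cmp c.rel (AArg.var n) (AArg.var (n + 1)))))) ↔
      (r₁ ∈ Term.val opFun u c.lhs ∧ r₂ ∈ Term.val opFun u c.rhs ∧ Rel.eval lt c.rel r₁ r₂) := by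
    intro r₁ r₂
    set v'' := Function.update (Function.update u n r₁) (n+1) r₂ with hv''
    have hvn : v'' n = r₁ := by
      rw [hv'', Function.update_of_ne (by omega), Function.update_self]
    have hvn1 : v'' (n+1) = r₂ := by rw [hv'', Function.update_self]
    have hagree : ∀ x, x < n → v'' x = u x := by
      intro x hx
      rw [hv'', Function.update_of_ne (by omega), Function.update_of_ne (by omega)]
    rw [sat_andF, sat_andF, sat_mem_var, sat_mem_var]
    rw [show AFml.sat opFun aggFun lt I v'' (AFml.cmp c.rel (AArg.var n) (AArg.var (n+1))) ↔
      Rel.eval lt c.rel (AArg.eval opFun aggFun lt I v'' (AArg.var n))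
        (AArg.eval opFun aggFun lt I v'' (AArg.var (n+1))) from Iff.rfl]
    rw [show AArg.eval opFun aggFun lt I v'' (AArg.var n) = v'' n from by simp [AArg.eval]]
    rw [show AArg.eval opFun aggFun lt I v'' (AArg.var (n+1)) = v'' (n+1) from by simp [AArg.eval]]
    rw [hvn, hvn1]
    rw [Term.val_congr opFun c.lhs (fun x hx => hagree x (hlhs x hx))]
    rw [Term.val_congr opFun c.rhs (fun x hx => hagree x (hrhs x hx))]
  constructor
  · rintro ⟨r₁, hr₁⟩
    rw [sat_exF] at hr₁
    obtain ⟨r₂, hr₂⟩ := hr₁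
    obtain ⟨h1, h2, h3⟩ := (key r₁ r₂).1 hr₂
    exact ⟨r₁, h1, r₂, h2, h3⟩
  · rintro ⟨r₁, h1, r₂, h2, h3⟩
    exact ⟨r₁, (sat_exF opFun aggFun lt).2 ⟨r₂, (key r₁ r₂).2 ⟨h1, h2, h3⟩⟩⟩

theorem sat_phiCondElem {I : Interp C} {u : Val C} (ce : CondElem C O) :
    AFml.sat opFun aggFun lt I u (phiCondElem ce) ↔
      IForm.sat I (tauCondElem opFun lt u ce) := by
  cases ce with
  | inl l =>
      rw [show (phiCondElem (Sum.inl l) : AFml C O A) = phiLit l from rfl, tauCondElem]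
      exact sat_phiLit opFun aggFun lt
  | inr c =>
      rw [show (phiCondElem (Sum.inr c) : AFml C O A) = phiComp c from rfl, tauCondElem]
      exact sat_phiComp opFun aggFun lt

theorem sat_phiCond {I : Interp C} {u : Val C} {cond : List (CondElem C O)} :
    AFml.sat opFun aggFun lt I u (phiCond cond : AFml C O A) ↔
      IForm.sat I (tauCond opFun lt u cond) := by
  rw [phiCond, sat_andList, sat_tauCond]
  constructor
  · intro h ce hce
    rw [← sat_phiCondElem opFun aggFun lt ce]
    exact h _ (List.mem_map.2 ⟨ce, hce, rfl⟩)
  · rintro h F hF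
    obtain ⟨ce, hce, rfl⟩ := List.mem_map.1 hF
    rw [sat_phiCondElem opFun aggFun lt ce]
    exact h ce hce

mutual
theorem Pre.toTerm_varList : ∀ r : Pre C, (Pre.toTerm r : Term C O).varList = []
  | .inf => rfl
  | .sup => rfl
  | .num _ => rfl
  | .sym _ => rfl
  | .app f rs => by
      rw [Pre.toTerm, Term.varList]
      exact Pre.toTermL_varList rs

theorem Pre.toTermL_varList :
    ∀ rs : List (Pre C), Term.varListL (Pre.toTermL rs : List (Term C O)) = []
  | [] => rfl
  | r :: rs => by
      rw [Pre.toTermL, Term.varListL, Pre.toTerm_varList r, Pre.toTermL_varList rs]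
      rfl
end

theorem sat_phiAgg {I : Interp C} {u : Val C} (loc : List ℕ) (E : AggExpr C O A) :
    AFml.sat opFun aggFun lt I u (phiAgg loc E) ↔
      IForm.sat I (tauAgg opFun aggFun lt u (E.varList.dedup.filter (· ∈ loc)) E) := by
  classical
  set n := freshVar (loc ++ E.varList) with hn
  set zs := (List.range E.ts.length).map (· + (n + 1)) with hzs
  set xs := E.varList.dedup.filter (· ∈ loc) with hxs
  have hEn : ∀ x ∈ E.varList, x < n := fun x hx => freshVar_gt (by
    rw [List.mem_append]; exact Or.inr hx)
  have hlocn : ∀ x ∈ loc, x < n := fun x hx => freshVar_gt (by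
    rw [List.mem_append]; exact Or.inl hx)
  have hz : ∀ z ∈ zs, n + 1 ≤ z := fun z hzm => mem_shift_range hzm
  have hznd : zs.Nodup := nodup_shift_range _ _
  have hzlen : zs.length = E.ts.length := by simp [hzs]
  have hxnd : xs.Nodup := aggxs_nodup E loc
  have hxsE : ∀ x ∈ xs, x ∈ E.varList := fun x hx => aggxs_sub_var hx
  have hxsloc : ∀ x ∈ xs, x ∈ loc := fun x hx => aggxs_sub_loc hx
  have hzE : ∀ z ∈ zs, z ∉ E.varList := fun z hzm hzE' => by
    have := hEn z hzE'; have := hz z hzm; omega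
  have hzloc : ∀ z ∈ zs, z ∉ loc := fun z hzm hzl => by
    have := hlocn z hzl; have := hz z hzm; omega
  have hzxs : ∀ z ∈ zs, z ∉ xs := fun z hzm hzx => hzE z hzm (hxsE z hzx)
  set Finner := AFml.exList loc (AFml.andF
    (AFml.andList ((zs.zip E.ts).map (fun q => AFml.mem (AArg.var q.1) q.2)))
    (phiCond E.cond)) with hFinner
  set Δs : Set (AggTuple C xs) :=
    {rs | IForm.sat I (tauCond opFun lt (updList u xs rs.val) E.cond)} with hΔs
  rw [sat_tauAgg]
  rw [show phiAgg loc E = AFml.exF n (AFml.andF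
    (AFml.cmp E.rel (AArg.agg E.name zs Finner) (AArg.var n))
    (AFml.mem (AArg.var n) (boundTerm E.bound))) from rfl]
  rw [sat_exF]
  have hset : ∀ r : Pre C,
      {rs : List (Pre C) | rs.length = zs.length ∧
        AFml.sat opFun aggFun lt I (updList (Function.update u n r) zs rs) Finner} =
      {q : List (Pre C) | ∃ rs ∈ Δs, Term.vals opFun (updList u xs rs.val) E.ts q} := by
    intro r
    set v' := Function.update u n r with hv'
    have hv'E : ∀ x ∈ E.varList, v' x = u x := fun x hx =>
      Function.update_of_ne (by have := hEn x hx; omega) _ _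
    ext q
    simp only [Set.mem_setOf_eq]
    constructor
    · rintro ⟨hqlen, hsat⟩
      rw [hFinner, sat_exList] at hsat
      obtain ⟨w, hweq, hsat2⟩ := hsat
      rw [sat_andF, sat_andList] at hsat2
      obtain ⟨hmems, hcond⟩ := hsat2
      have hmapu₁ : zs.map (updList v' zs q) = q := updList_map_self v' zs hznd q hqlen
      have hwz : ∀ z ∈ zs, updList v' zs q z = w z := fun z hzm => hweq z (hzloc z hzm)
      have hmapw : zs.map w = q := by
        rw [← List.map_congr_left hwz]
        exact hmapu₁
      have hmems' : ∀ p ∈ zs.zip E.ts, w p.1 ∈ Term.val opFun w p.2 := by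
        intro p hp
        have := hmems _ (List.mem_map.2 ⟨p, hp, rfl⟩)
        rwa [sat_mem_var] at this
      have hvalsw : Term.vals opFun w E.ts q := by
        rw [← hmapw]
        exact (Term.vals_map_iff opFun hzlen).2 hmems'
      set ρ := xs.map w with hρ
      have hρlen : ρ.length = xs.length := by simp [hρ]
      have hagree : ∀ x ∈ E.varList, updList u xs ρ x = w x := by
        intro x hx
        by_cases hxxs : x ∈ xs
        · rw [hρ]
          exact updList_apply_mem u w xs hxnd x hxxs
        · have hxloc : x ∉ loc := fun hxl => hxxs (mem_aggxs hx hxl)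
          rw [updList_notMem u xs ρ hxxs]
          have h1 : updList v' zs q x = w x := hweq x hxloc
          have h2 : updList v' zs q x = v' x :=
            updList_notMem v' zs q (fun hxz => hzE x hxz hx)
          rw [← h1, h2, hv'E x hx]
      have hvals2 : Term.vals opFun (updList u xs ρ) E.ts q := by
        refine (Term.vals_congr opFun E.ts ?_ q).2 hvalsw
        intro x hx
        exact hagree x (ts_var_sub hx)
      refine ⟨⟨ρ, hρlen⟩, ?_, hvals2⟩
      show IForm.sat I (tauCond opFun lt (updList u xs ρ) E.cond)
      rw [← tauCond_congr opFun lt E.cond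
        (fun x hx => (hagree x (cond_var_sub hx)).symm : ∀ x ∈ E.cond.flatMap CondElem.varList, w x = updList u xs ρ x)]
      rw [← sat_phiCond opFun aggFun lt]
      exact hcond
    · rintro ⟨⟨ρ, hρlen⟩, hΔ, hvals⟩
      have hqlen : q.length = zs.length := (Term.vals_length opFun hvals).trans hzlen.symm
      refine ⟨hqlen, ?_⟩
      set u₁ := updList v' zs q with hu₁
      set w := updList u₁ xs ρ with hw
      rw [hFinner, sat_exList]
      refine ⟨w, ?_, ?_⟩
      · intro y hy
        have hyxs : y ∉ xs := fun hyx => hy (hxsloc y hyx)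
        rw [hw]
        exact (updList_notMem u₁ xs ρ hyxs).symm
      · have hagree2 : ∀ x ∈ E.varList, w x = updList u xs ρ x := by
          intro x hx
          by_cases hxxs : x ∈ xs
          · rw [hw]
            exact updList_congr xs ρ hρlen x (Or.inl hxxs)
          · have hxloc : x ∉ loc := fun hxl => hxxs (mem_aggxs hx hxl)
            rw [hw, updList_notMem u₁ xs ρ hxxs, hu₁,
              updList_notMem v' zs q (fun hxz => hzE x hxz hx), hv'E x hx,
              updList_notMem u xs ρ hxxs]
        have hmapw : zs.map w = q := by
          have hzw : ∀ z ∈ zs, w z = u₁ z := by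
            intro z hzm
            rw [hw]
            exact updList_notMem u₁ xs ρ (hzxs z hzm)
          rw [List.map_congr_left hzw, hu₁]
          exact updList_map_self v' zs hznd q hqlen
        rw [sat_andF, sat_andList]
        constructor
        · intro F hF
          obtain ⟨p, hp, rfl⟩ := List.mem_map.1 hF
          rw [sat_mem_var]
          have hvalsw : Term.vals opFun w E.ts q := by
            refine (Term.vals_congr opFun E.ts ?_ q).1 hvals
            intro x hx
            exact (hagree2 x (ts_var_sub hx)).symm
          have := (Term.vals_map_iff opFun hzlen).1 (by rw [hmapw]; exact hvalsw)
          exact this p hp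
        · rw [sat_phiCond opFun aggFun lt]
          rw [tauCond_congr opFun lt E.cond
            (fun x hx => hagree2 x (cond_var_sub hx) : ∀ x ∈ E.cond.flatMap CondElem.varList, w x = updList u xs ρ x)]
          exact hΔ
  have hbound : ∀ r : Pre C, (AFml.sat opFun aggFun lt I (Function.update u n r)
      (AFml.mem (AArg.var n) (boundTerm E.bound)) ↔ r = boundVal u E.bound) := by
    intro r
    rw [sat_mem_var, Function.update_self]
    cases hb : E.bound with
    | inl x =>
        have hxE : x ∈ E.varList := bound_var_sub (by
          rw [hb, boundVarList]; exact List.mem_singleton_self x)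
        rw [show (boundTerm (Sum.inl x) : Term C O) = Term.var x from rfl]
        rw [Term.val, boundVal]
        rw [Function.update_of_ne (by have := hEn x hxE; omega)]
        exact Set.mem_singleton_iff
    | inr pr =>
        rw [show (boundTerm (Sum.inr pr) : Term C O) = Pre.toTerm pr from rfl]
        rw [Term.val_congr opFun (Pre.toTerm pr) (u := Function.update u n r) (w := u)
          (by rw [Pre.toTerm_varList]; intro x hx; exact absurd hx List.not_mem_nil)]
        rw [Pre.val_toTerm, boundVal]
        exact Set.mem_singleton_iff
  have hcmp : ∀ r : Pre C, (AFml.sat opFun aggFun lt I (Function.update u n r)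
      (AFml.cmp E.rel (AArg.agg E.name zs Finner) (AArg.var n)) ↔
      Rel.eval lt E.rel (aggFun E.name
        {q : List (Pre C) | ∃ rs ∈ Δs, Term.vals opFun (updList u xs rs.val) E.ts q}) r) := by
    intro r
    rw [show AFml.sat opFun aggFun lt I (Function.update u n r)
      (AFml.cmp E.rel (AArg.agg E.name zs Finner) (AArg.var n)) ↔
      Rel.eval lt E.rel
        (AArg.eval opFun aggFun lt I (Function.update u n r) (AArg.agg E.name zs Finner))
        (AArg.eval opFun aggFun lt I (Function.update u n r) (AArg.var n)) from Iff.rfl]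
    rw [show AArg.eval opFun aggFun lt I (Function.update u n r) (AArg.var n) =
      Function.update u n r n from by simp [AArg.eval], Function.update_self]
    rw [show AArg.eval opFun aggFun lt I (Function.update u n r) (AArg.agg E.name zs Finner) =
      aggFun E.name {rs : List (Pre C) | rs.length = zs.length ∧
        AFml.sat opFun aggFun lt I (updList (Function.update u n r) zs rs) Finner} from by
      rw [AArg.eval]]
    rw [hset r]
  constructor
  · rintro ⟨r, hr⟩
    rw [sat_andF] at hr
    obtain ⟨hc, hm⟩ := hr
    have hreq : r = boundVal u E.bound := (hbound r).1 hm
    rw [hcmp r, hreq] at hc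
    exact hc
  · intro hj
    refine ⟨boundVal u E.bound, ?_⟩
    rw [sat_andF]
    exact ⟨(hcmp _).2 hj, (hbound _).2 rfl⟩

theorem sat_phiBody {I : Interp C} {u : Val C} (loc : List ℕ) (b : List (BElem C O A)) :
    AFml.sat opFun aggFun lt I u (phiBody loc b) ↔
      IForm.sat I (tauBody opFun aggFun lt u loc b) := by
  rw [phiBody, sat_andList, tauBody, sat_conjList]
  have helem : ∀ e : BElem C O A,
      (AFml.sat opFun aggFun lt I u (phiBElem loc e) ↔
       IForm.sat I (tauBElem opFun aggFun lt u loc e)) := by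
    intro e
    cases e with
    | lit l => rw [phiBElem, tauBElem]; exact sat_phiLit opFun aggFun lt
    | comp c => rw [phiBElem, tauBElem]; exact sat_phiComp opFun aggFun lt
    | agg E => rw [phiBElem, tauBElem]; exact sat_phiAgg opFun aggFun lt loc E
  constructor
  · intro h F hF
    obtain ⟨e, he, rfl⟩ := List.mem_map.1 hF
    rw [← helem e]
    exact h _ (List.mem_map.2 ⟨e, he, rfl⟩)
  · intro h F hF
    obtain ⟨e, he, rfl⟩ := List.mem_map.1 hF
    rw [helem e]
    exact h _ (List.mem_map.2 ⟨e, he, rfl⟩)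

/-! #### Rule-level lemmas and assembly -/

theorem sat_tauBody_congr {I : Interp C} {R : Rule C O A} {u w : Val C}
    (h : ∀ x ∈ R.globalList, u x = w x) :
    (IForm.sat I (tauBody opFun aggFun lt u R.localList R.body) ↔
     IForm.sat I (tauBody opFun aggFun lt w R.localList R.body)) := by
  rw [tauBody, tauBody, sat_conjList, sat_conjList]
  have helem : ∀ e ∈ R.body,
      (IForm.sat I (tauBElem opFun aggFun lt u R.localList e) ↔
       IForm.sat I (tauBElem opFun aggFun lt w R.localList e)) := by
    intro e he
    cases e with
    | lit l =>
        rw [tauBElem, tauBElem,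
          tauLit_congr opFun l (fun x hx => h x (global_of_lit he x hx))]
    | comp c =>
        rw [tauBElem, tauBElem,
          tauComp_congr opFun lt c (fun x hx => h x (global_of_comp he x hx))]
    | agg E =>
        set xs := E.varList.dedup.filter (· ∈ R.localList) with hxs
        rw [tauBElem, tauBElem, sat_tauAgg, sat_tauAgg]
        have hupd : ∀ (rs : List (Pre C)), rs.length = xs.length →
            ∀ x ∈ E.varList, updList u xs rs x = updList w xs rs x := by
          intro rs hlen x hx
          refine updList_congr xs rs hlen x ?_
          by_cases hxxs : x ∈ xs
          · exact Or.inl hxxs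
          · have hxloc : x ∉ R.localList := fun hxl => hxxs (mem_aggxs hx hxl)
            exact Or.inr (h x (global_of_aggvar he hx hxloc))
        have hcond : ∀ rs : AggTuple C xs,
            tauCond opFun lt (updList u xs rs.val) E.cond =
            tauCond opFun lt (updList w xs rs.val) E.cond := fun rs =>
          tauCond_congr opFun lt E.cond
            (fun x hx => hupd rs.val rs.prop x (cond_var_sub hx))
        have hΔ : {rs : AggTuple C xs |
              IForm.sat I (tauCond opFun lt (updList u xs rs.val) E.cond)} =
            {rs : AggTuple C xs |
              IForm.sat I (tauCond opFun lt (updList w xs rs.val) E.cond)} :=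
          Set.ext fun rs => by simp only [Set.mem_setOf_eq]; rw [hcond rs]
        have hbv : boundVal u E.bound = boundVal w E.bound := by
          cases hb : E.bound with
          | inl x =>
              rw [boundVal, boundVal]
              exact h x (global_of_bound he (by
                rw [hb, boundVarList]; exact List.mem_singleton_self x))
          | inr pr => rfl
        have hJ : ∀ Δ : Set (AggTuple C xs),
            (Justifies opFun aggFun lt u xs E Δ ↔ Justifies opFun aggFun lt w xs E Δ) := by
          intro Δ
          rw [Justifies, Justifies, hbv]
          rw [show {q : List (Pre C) | ∃ rs ∈ Δ, Term.vals opFun (updList u xs rs.val) E.ts q} =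
            {q : List (Pre C) | ∃ rs ∈ Δ, Term.vals opFun (updList w xs rs.val) E.ts q} from
            Set.ext fun q => exists_congr fun rs => and_congr_right fun _ =>
              Term.vals_congr opFun E.ts
                (fun x hx => hupd rs.val rs.prop x (ts_var_sub hx)) q]
        rw [hΔ]
        exact hJ _
  constructor <;> intro hall F hF <;> obtain ⟨e, he, rfl⟩ := List.mem_map.1 hF
  · exact (helem e he).1 (hall _ (List.mem_map.2 ⟨e, he, rfl⟩))
  · exact (helem e he).2 (hall _ (List.mem_map.2 ⟨e, he, rfl⟩))

theorem global_sub_varList {R : Rule C O A} : ∀ x ∈ R.globalList, x ∈ R.varList := by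
  intro x hx
  rw [Rule.globalList, List.mem_dedup, List.mem_append] at hx
  rw [Rule.varList, List.mem_append]
  rcases hx with hx | hx
  · exact Or.inl hx
  · right
    obtain ⟨b, hb, hxb⟩ := List.mem_flatMap.1 hx
    refine List.mem_flatMap.2 ⟨b, hb, ?_⟩
    cases b with
    | lit l => exact hxb
    | comp c => exact hxb
    | agg E => rw [BElem.varList]; exact bound_var_sub hxb

theorem mem_varListL {t : Term C O} {x : ℕ} (hx : x ∈ t.varList) :
    ∀ {ts : List (Term C O)}, t ∈ ts → x ∈ Term.varListL ts := by
  intro ts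
  induction ts with
  | nil => intro h; exact absurd h List.not_mem_nil
  | cons t' ts ih =>
      intro h
      rw [Term.varListL, List.mem_append]
      rcases List.mem_cons.1 h with h' | h'
      · subst h'; exact Or.inl hx
      · exact Or.inr (ih h')

theorem sat_memConj {I : Interp C} {u : Val C} {Vs : List ℕ} {ts : List (Term C O)}
    (hlen : Vs.length = ts.length) :
    AFml.sat opFun aggFun lt I u (memConj Vs ts : AFml C O A) ↔
      Term.vals opFun u ts (Vs.map u) := by
  rw [memConj, sat_andList, Term.vals_map_iff opFun hlen]
  constructor
  · intro h q hq
    have := h _ (List.mem_map.2 ⟨q, hq, rfl⟩)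
    rwa [sat_mem_var] at this
  · intro h F hF
    obtain ⟨q, hq, rfl⟩ := List.mem_map.1 hF
    rw [sat_mem_var]
    exact h q hq

end Proof

theorem theorem_1' {C O A : Type} [DecidableEq C]
    (opFun : O → List ℤ → Option ℤ)
    (aggFun : A → Set (List (Pre C)) → Pre C)
    (lt : Pre C → Pre C → Prop)
    (Γ : List (Rule C O A)) (I : Interp C)
    (hstable : EGStable opFun aggFun lt I {R | R ∈ Γ}) :
    SatCompletion opFun aggFun lt Γ I := by
  have hsr := stable_sat_rules opFun aggFun lt hstable
  have hsupp := stable_support opFun aggFun lt hstable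
  have hcons := stable_constraints opFun aggFun lt hstable
  constructor
  · intro p n hocc v
    set base := freshVar (Γ.flatMap Rule.varList) with hbase
    set Vs := (List.range n).map (· + base) with hVs
    have hVnd : Vs.Nodup := nodup_shift_range _ _
    have hVlen : Vs.length = n := by simp [hVs]
    have hVglob : ∀ R ∈ Γ, ∀ V ∈ Vs, V ∉ R.globalList := by
      intro R hR V hV hmem
      have h1 : V < base := freshVar_gt (List.mem_flatMap.2 ⟨R, hR, global_sub_varList V hmem⟩)
      have h2 : base ≤ V := mem_shift_range hV
      omega
    rw [show completedDef Γ p n = AFml.allList Vs (AFml.iffF (AFml.atom p (Vs.map AArg.var))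
      (AFml.orList ((Γ.filter (definesB p n)).map
        (fun R => AFml.exList R.globalList (ruleAnte Vs R)))) : AFml C O A) from rfl]
    rw [sat_allList]
    intro w hw
    rw [sat_iffF, sat_atom_vars, sat_orList]
    constructor
    · intro hmem
      obtain ⟨R, hR, uu, hbody, ts, hh, hvals⟩ := hsupp (p, Vs.map w) hmem
      have htslen : ts.length = n := by
        have h1 := Term.vals_length opFun hvals
        rw [List.length_map, hVlen] at h1
        exact h1.symm
      have hRΓ : R ∈ Γ := hR
      have hdef : definesB p n R = true := by
        rcases hh with hhead | hhead
        · simp [definesB, hhead, htslen]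
        · simp [definesB, hhead, htslen]
      have hRfilter : R ∈ Γ.filter (definesB p n) := List.mem_filter.2 ⟨hRΓ, hdef⟩
      refine ⟨_, List.mem_map.2 ⟨R, hRfilter, rfl⟩, ?_⟩
      rw [sat_exList]
      set w' := updList w R.globalList (R.globalList.map uu) with hw'
      have hglobagree : ∀ x ∈ R.globalList, w' x = uu x := fun x hx =>
        updList_apply_mem w uu R.globalList R.globalList_nodup x hx
      refine ⟨w', eqOff_updList _ _ _, ?_⟩
      have hVsw' : Vs.map w' = Vs.map w := List.map_congr_left (fun V hV =>
        updList_notMem w _ _ (hVglob R hRΓ V hV))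
      have hbody' : IForm.sat I (tauBody opFun aggFun lt w' R.localList R.body) :=
        (sat_tauBody_congr opFun aggFun lt
          (fun x hx => (hglobagree x hx).symm)).1 hbody
      have hvalsw' : Term.vals opFun w' ts (Vs.map w) := by
        rcases hh with hhead | hhead
        all_goals {
          refine (Term.vals_congr opFun ts ?_ _).1 hvals
          intro x hx
          refine (hglobagree x (head_var_global x ?_)).symm
          rw [hhead]
          exact hx }
      rcases hh with hhead | hhead
      · simp only [ruleAnte, hhead]
        rw [sat_andF]
        constructor
        · rw [sat_memConj opFun aggFun lt (hVlen.trans htslen.symm), hVsw']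
          exact hvalsw'
        · rw [sat_phiBody opFun aggFun lt]
          exact hbody'
      · simp only [ruleAnte, hhead]
        rw [sat_andF, sat_andF]
        refine ⟨?_, ?_, ?_⟩
        · rw [sat_memConj opFun aggFun lt (hVlen.trans htslen.symm), hVsw']
          exact hvalsw'
        · rw [sat_phiBody opFun aggFun lt]
          exact hbody'
        · rw [sat_atom_vars, hVsw']
          exact hmem
    · rintro ⟨F, hF, hsatF⟩
      obtain ⟨R, hRf, rfl⟩ := List.mem_map.1 hF
      obtain ⟨hR, hdef⟩ := List.mem_filter.1 hRf
      rw [sat_exList] at hsatF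
      obtain ⟨w', hw'eq, hsat⟩ := hsatF
      have hVsw' : Vs.map w' = Vs.map w := List.map_congr_left (fun V hV =>
        (hw'eq V (hVglob R hR V hV)).symm)
      rcases hhead : R.head with ⟨q, ts⟩ | ⟨q, ts⟩ | _
      · have hqn : q = p ∧ ts.length = n := by simpa [definesB, hhead] using hdef
        simp only [ruleAnte, hhead] at hsat
        rw [sat_andF] at hsat
        obtain ⟨hmc, hpb⟩ := hsat
        rw [sat_memConj opFun aggFun lt (by rw [hVlen, hqn.2])] at hmc
        rw [sat_phiBody opFun aggFun lt] at hpb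
        have hrule := hsr R hR w'
        simp only [tauRule, hhead] at hrule
        have hatom : IForm.sat I (IForm.atom (q, Vs.map w')) :=
          hrule hpb ⟨Vs.map w', hmc⟩
        rw [← hVsw', ← hqn.1]
        exact hatom
      · have hqn : q = p ∧ ts.length = n := by simpa [definesB, hhead] using hdef
        simp only [ruleAnte, hhead] at hsat
        rw [sat_andF, sat_andF] at hsat
        have hatom := hsat.2.2
        rw [sat_atom_vars] at hatom
        rw [← hVsw', ← hqn.1]
        exact hatom
      · exfalso
        simp [definesB, hhead] at hdef
  · intro R hR hE v
    rw [phiConstraintRep, sat_negF, sat_phiBody opFun aggFun lt]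
    exact hcons R hR hE v


/-- Theorem 1: every stable model of a finite EG program
satisfies its completion. -/
theorem theorem_1 {C O A : Type} [DecidableEq C]
    (opFun : O → List ℤ → Option ℤ)
    (aggFun : A → Set (List (Pre C)) → Pre C)
    (lt : Pre C → Pre C → Prop) (hlt : PreOrderOK lt)
    (Γ : List (Rule C O A)) (I : Interp C)
    (hstable : EGStable opFun aggFun lt I {R | R ∈ Γ}) :
    SatCompletion opFun aggFun lt Γ I :=
  theorem_1' opFun aggFun lt Γ I hstable

end EG
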